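/- arXiv:0906.4290 — 8 statements merged into one kernel-verified Lean document; each statement's English description precedes it below -/
import Mathlib

section
/- The partial sums of central binomial coefficients satisfy ∑_{k=0}^{n} C(2k,k) ~ 4^{n+1}/(3·√(π·n)) as n → ∞, i.e., the ratio of the two sides tends to 1 as n tends to infinity. -/
open Finset Filter Real
open Asymptotics Topology

noncomputable def cbB (n : ℕ) : ℝ := 4 ^ (n + 1) / (3 * Real.sqrt (Real.pi * n))
noncomputable def cbD (k : ℕ) : ℝ := 4 ^ k / Real.sqrt (Real.pi * k)
noncomputable def cbG (k : ℕ) : ℝ := cbB k - cbB (k - 1)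

lemma cbB_zero : cbB 0 = 0 := by simp [cbB]

-- central binomial ~ d
lemma central_equiv_d :
    (fun k : ℕ => ((2 * k).choose k : ℝ)) ~[atTop] cbD := by
  have stir := Stirling.factorial_isEquivalent_stirling
  have h2k : Tendsto (fun k : ℕ => 2 * k) atTop atTop :=
    tendsto_atTop_mono (fun n => Nat.le_mul_of_pos_left n two_pos) tendsto_id
  have stir2 : (fun k : ℕ => ((2 * k).factorial : ℝ)) ~[atTop]
      (fun k : ℕ => Real.sqrt (2 * ((2 * k : ℕ) : ℝ) * π) * (((2 * k : ℕ) : ℝ) / exp 1) ^ (2 * k)) :=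
    stir.comp_tendsto h2k
  have hsq : (fun k : ℕ => ((k.factorial : ℝ) * (k.factorial : ℝ))) ~[atTop]
      (fun k : ℕ => (Real.sqrt (2 * (k : ℝ) * π) * ((k : ℝ) / exp 1) ^ k) *
        (Real.sqrt (2 * (k : ℝ) * π) * ((k : ℝ) / exp 1) ^ k)) := stir.mul stir
  have hdiv := stir2.div hsq
  have hc : (fun k : ℕ => ((2 * k).choose k : ℝ)) =
      fun k : ℕ => ((2 * k).factorial : ℝ) / ((k.factorial : ℝ) * (k.factorial : ℝ)) := by
    funext k
    rw [eq_div_iff (by positivity), ← Nat.cast_mul, ← Nat.cast_mul]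
    norm_cast
    have := Nat.choose_mul_factorial_mul_factorial (Nat.le_mul_of_pos_left k two_pos)
    rw [show 2 * k - k = k by omega] at this
    rw [← this]; ring
  rw [hc]
  refine hdiv.trans (Filter.EventuallyEq.isEquivalent ?_)
  filter_upwards [eventually_ge_atTop 1] with k hk
  have hx : (0 : ℝ) < (k : ℝ) := by exact_mod_cast hk
  have hss : Real.sqrt (2 * (k : ℝ) * π) * Real.sqrt (2 * (k : ℝ) * π) = 2 * (k : ℝ) * π :=
    Real.mul_self_sqrt (by positivity)
  have hpow : (((2 * k : ℕ) : ℝ) / exp 1) ^ (2 * k) = 4 ^ k * ((k : ℝ) / exp 1) ^ (2 * k) := by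
    push_cast
    rw [show (2 * (k : ℝ)) / exp 1 = 2 * ((k : ℝ) / exp 1) by ring, mul_pow,
      show (2 : ℝ) ^ (2 * k) = 4 ^ k by rw [pow_mul]; norm_num]
  have hsqrt4 : Real.sqrt (2 * ((2 * k : ℕ) : ℝ) * π) = 2 * Real.sqrt ((k : ℝ) * π) := by
    push_cast
    rw [show 2 * (2 * (k : ℝ)) * π = 4 * ((k : ℝ) * π) by ring,
      show (4 : ℝ) = 2 ^ 2 by norm_num, Real.sqrt_mul (by positivity), Real.sqrt_sq (by norm_num)]
  have hpe : ((k : ℝ) / exp 1) ^ k * ((k : ℝ) / exp 1) ^ k = ((k : ℝ) / exp 1) ^ (2 * k) := by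
    rw [two_mul, pow_add]
  have hs : Real.sqrt ((k : ℝ) * π) > 0 := Real.sqrt_pos.mpr (by positivity)
  have hsπ : Real.sqrt ((k : ℝ) * π) * Real.sqrt ((k : ℝ) * π) = (k : ℝ) * π :=
    Real.mul_self_sqrt (by positivity)
  have hpne : ((k : ℝ) / exp 1) ^ (2 * k) ≠ 0 := by positivity
  show _ = cbD k
  rw [Pi.div_apply]
  rw [cbD, hsqrt4, hpow]
  rw [show (Real.sqrt (2 * (k : ℝ) * π) * ((k : ℝ) / exp 1) ^ k) *
      (Real.sqrt (2 * (k : ℝ) * π) * ((k : ℝ) / exp 1) ^ k)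
      = (2 * (k : ℝ) * π) * ((k : ℝ) / exp 1) ^ (2 * k) by
    rw [mul_mul_mul_comm, hss, hpe]]
  rw [show Real.pi * k = (k : ℝ) * π by ring]
  rw [div_eq_div_iff (by positivity) hs.ne']
  linear_combination (2 * (4:ℝ) ^ k * ((k : ℝ) / exp 1) ^ (2 * k)) * hsπ

lemma cbB_nonneg (n : ℕ) : 0 ≤ cbB n := by unfold cbB; positivity

lemma cbG_nonneg : (0 : ℕ → ℝ) ≤ cbG := by
  intro k
  simp only [Pi.zero_apply]
  match k with
  | 0 => simp [cbG]
  | 1 => simp [cbG, cbB_zero, cbB_nonneg 1]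
  | (k+2) =>
    have he : k + 2 - 1 = k + 1 := rfl
    rw [cbG, he, sub_nonneg, cbB, cbB]
    have hx : (0:ℝ) < ((k:ℝ)+1) := by positivity
    have h1 : (0:ℝ) < Real.sqrt (π * ((k:ℕ)+1 : ℕ)) := by
      apply Real.sqrt_pos.mpr; push_cast; positivity
    have h2 : (0:ℝ) < Real.sqrt (π * ((k:ℕ)+2 : ℕ)) := by
      apply Real.sqrt_pos.mpr; push_cast; positivity
    rw [div_le_div_iff₀ (by positivity) (by positivity)]
    have h16 : Real.sqrt (16 * (π * ((k:ℕ)+1 : ℕ))) = 4 * Real.sqrt (π * ((k:ℕ)+1 : ℕ)) := by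
      rw [Real.sqrt_mul (by norm_num : (0:ℝ) ≤ 16)]
      congr 1
      rw [show (16:ℝ) = 4^2 by norm_num]
      exact Real.sqrt_sq (by norm_num)
    have key : Real.sqrt (π * ((k:ℕ)+2 : ℕ)) ≤ 4 * Real.sqrt (π * ((k:ℕ)+1 : ℕ)) := by
      rw [← h16]
      apply Real.sqrt_le_sqrt
      push_cast
      nlinarith [pi_pos]
    calc 4 ^ (k + 1 + 1) * (3 * Real.sqrt (π * ((k:ℕ)+2 : ℕ)))
        ≤ 4 ^ (k + 1 + 1) * (3 * (4 * Real.sqrt (π * ((k:ℕ)+1 : ℕ)))) := by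
          gcongr
      _ = 4 ^ (k + 2 + 1) * (3 * Real.sqrt (π * ((k:ℕ)+1 : ℕ))) := by ring

lemma sum_cbG (n : ℕ) : ∑ i ∈ Finset.range (n + 1), cbG i = cbB n := by
  induction n with
  | zero => simp [cbG, cbB_zero]
  | succ n ih => rw [Finset.sum_range_succ, ih, cbG, Nat.add_sub_cancel]; ring

lemma cbB_atTop : Tendsto cbB atTop atTop := by
  have h2 : Tendsto (fun n : ℕ => (2:ℝ) ^ n / 3) atTop atTop :=
    (tendsto_pow_atTop_atTop_of_one_lt (by norm_num : (1:ℝ) < 2)).atTop_div_const (by norm_num)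
  apply tendsto_atTop_mono' atTop _ h2
  filter_upwards [eventually_ge_atTop 1] with n hn
  have hx : (1:ℝ) ≤ (n:ℝ) := by exact_mod_cast hn
  have hsq : Real.sqrt (π * n) ≤ 2 * n := by
    rw [show (2:ℝ) * n = Real.sqrt ((2*n)^2) by rw [Real.sqrt_sq (by positivity)]]
    apply Real.sqrt_le_sqrt
    nlinarith [pi_lt_d2]
  have h1 : (0:ℝ) < Real.sqrt (π * n) := Real.sqrt_pos.mpr (by positivity)
  have step1 : 4 ^ (n+1) / (3 * (2 * n)) ≤ cbB n := by
    rw [cbB]; gcongr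
  refine le_trans ?_ step1
  rw [div_le_div_iff₀ (by norm_num) (by positivity)]
  have hn2 : (n:ℝ) ≤ 2 ^ n := by exact_mod_cast (Nat.lt_two_pow_self (n := n)).le
  have h4 : (4:ℝ) ^ (n+1) = 4 * (2^n * 2^n) := by
    rw [pow_succ, show (4:ℝ) = 2*2 by norm_num, mul_pow]; ring
  nlinarith [pow_pos (by norm_num : (0:ℝ) < 2) n]

lemma cbG_equiv_d : cbG ~[atTop] cbD := by
  have hz : ∀ᶠ k : ℕ in atTop, cbD k ≠ 0 := by
    filter_upwards [eventually_ge_atTop 1] with k hk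
    have hx : (1:ℝ) ≤ (k:ℝ) := by exact_mod_cast hk
    have : (0:ℝ) < cbD k := by
      rw [cbD]; apply div_pos (by positivity) (Real.sqrt_pos.mpr (by positivity))
    exact this.ne'
  rw [isEquivalent_iff_tendsto_one hz]
  rw [← tendsto_add_atTop_iff_nat 1]
  have hlim : Tendsto (fun k : ℕ => 4/3 - 1/3 * (Real.sqrt ((k:ℝ)+1) / Real.sqrt k))
      atTop (𝓝 1) := by
    have h1 : Tendsto (fun k : ℕ => ((k:ℝ)+1) / k) atTop (𝓝 1) := by
      have : Tendsto (fun n : ℕ => 1 / (n : ℝ)) atTop (𝓝 0) := tendsto_one_div_atTop_nhds_zero_nat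
      have h := this.const_add 1
      simp only [add_zero] at h
      refine h.congr' ?_
      filter_upwards [eventually_ge_atTop 1] with k hk
      have hx : (0:ℝ) < (k:ℝ) := by exact_mod_cast hk
      field_simp
    have h3 : Tendsto (fun k : ℕ => Real.sqrt ((k:ℝ)+1) / Real.sqrt k) atTop (𝓝 1) := by
      have h2 := (Real.continuous_sqrt.tendsto 1).comp h1
      simp only [Function.comp_def, Real.sqrt_one] at h2
      refine h2.congr' ?_
      filter_upwards [eventually_ge_atTop 1] with k hk
      rw [Real.sqrt_div (by positivity)]
    have := (tendsto_const_nhds (x := (4:ℝ)/3)).sub (h3.const_mul (1/3))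
    norm_num at this ⊢
    exact this
  refine hlim.congr' ?_
  filter_upwards [eventually_ge_atTop 1] with k hk
  have hx : (1:ℝ) ≤ (k:ℝ) := by exact_mod_cast hk
  have hx0 : (0:ℝ) < (k:ℝ) := by linarith
  simp only [Pi.div_apply]
  rw [cbG, cbD, Nat.add_sub_cancel, cbB, cbB]
  push_cast
  have hsπ : (0:ℝ) < Real.sqrt π := Real.sqrt_pos.mpr pi_pos
  have hsk : (0:ℝ) < Real.sqrt k := Real.sqrt_pos.mpr hx0
  have hsk1 : (0:ℝ) < Real.sqrt ((k:ℝ)+1) := Real.sqrt_pos.mpr (by linarith)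
  rw [Real.sqrt_mul pi_pos.le, Real.sqrt_mul pi_pos.le]
  have h4 : (0:ℝ) < (4:ℝ)^(k+1) := by positivity
  field_simp
  ring

theorem central_binomial_partial_sum_equivalent :
    Filter.Tendsto
      (fun n : ℕ =>
        (∑ k ∈ Finset.range (n + 1), ((2 * k).choose k : ℝ)) /
          (4 ^ (n + 1) / (3 * Real.sqrt (Real.pi * n))))
      Filter.atTop (nhds 1) := by
  have hcg : (fun k : ℕ => ((2 * k).choose k : ℝ)) ~[atTop] cbG :=
    central_equiv_d.trans cbG_equiv_d.symm
  have hlo : (fun k : ℕ => ((2 * k).choose k : ℝ) - cbG k) =o[atTop] cbG := hcg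
  have hsg : Tendsto (fun n : ℕ => ∑ i ∈ Finset.range n, cbG i) atTop atTop := by
    rw [← tendsto_add_atTop_iff_nat 1]
    exact cbB_atTop.congr (fun n => (sum_cbG n).symm)
  have hsum := hlo.sum_range cbG_nonneg hsg
  have hequiv : (fun n : ℕ => ∑ i ∈ Finset.range n, ((2 * i).choose i : ℝ)) ~[atTop]
      (fun n : ℕ => ∑ i ∈ Finset.range n, cbG i) := by
    show (_ - _) =o[atTop] _
    refine hsum.congr' ?_ (by rfl)
    filter_upwards with n
    simp [Finset.sum_sub_distrib]
  have hcomp : (fun n : ℕ => ∑ i ∈ Finset.range (n + 1), ((2 * i).choose i : ℝ)) ~[atTop]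
      (fun n : ℕ => ∑ i ∈ Finset.range (n + 1), cbG i) :=
    hequiv.comp_tendsto (tendsto_add_atTop_nat 1)
  have hfinal : (fun n : ℕ => ∑ i ∈ Finset.range (n + 1), ((2 * i).choose i : ℝ)) ~[atTop] cbB := by
    refine hcomp.congr_right ?_
    filter_upwards with n
    exact sum_cbG n
  have hbne : ∀ᶠ n : ℕ in atTop, cbB n ≠ 0 := by
    filter_upwards [eventually_ge_atTop 1] with n hn
    have hx : (1:ℝ) ≤ (n:ℝ) := by exact_mod_cast hn
    have : (0:ℝ) < cbB n := by
      rw [cbB]; apply div_pos (by positivity)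
      have : (0:ℝ) < Real.sqrt (π * n) := Real.sqrt_pos.mpr (by positivity)
      positivity
    exact this.ne'
  have := (isEquivalent_iff_tendsto_one hbne).mp hfinal
  exact this
end

section
/- The partial sums of Catalan numbers satisfy ∑_{k=0}^{n} C_k ~ 4^{n+1}/(3·n·√(π·n)) as n → ∞, i.e., the ratio of the two sides tends to 1 as n tends to infinity. -/
open Finset Filter Real

open Asymptotics Nat Topology

noncomputable def gg (n : ℕ) : ℝ := 4 ^ n / (n * Real.sqrt (Real.pi * n))

lemma gg_nonneg (n : ℕ) : 0 ≤ gg n := by unfold gg; positivity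

lemma gg_pos {n : ℕ} (hn : 1 ≤ n) : 0 < gg n := by
  have hn0 : (0:ℝ) < n := by exact_mod_cast hn
  unfold gg
  have : 0 < Real.sqrt (Real.pi * n) := Real.sqrt_pos.mpr (by positivity)
  positivity

lemma gg_zero : gg 0 = 0 := by simp [gg]

lemma tendsto_gg_atTop : Tendsto gg atTop atTop := by
  have h1 : Tendsto (fun n : ℕ => (n:ℝ)^2 * (1/4:ℝ)^n) atTop (𝓝 0) := by
    simpa using (summable_pow_mul_geometric_of_norm_lt_one (R := ℝ) 2 (r := 1/4)
      (by rw [norm_eq_abs]; rw [abs_of_pos (by norm_num)]; norm_num)).tendsto_atTop_zero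
  have h2 : Tendsto (fun n : ℕ => Real.sqrt Real.pi * ((n:ℝ)^2 * (1/4:ℝ)^n)) atTop (𝓝 0) := by
    simpa using h1.const_mul (Real.sqrt Real.pi)
  have hb : ∀ᶠ n : ℕ in atTop, (gg n)⁻¹ ≤ Real.sqrt Real.pi * ((n:ℝ)^2 * (1/4:ℝ)^n) := by
    filter_upwards [eventually_ge_atTop 1] with n hn
    have hn0 : (1:ℝ) ≤ n := by exact_mod_cast hn
    have hs : Real.sqrt (Real.pi * n) = Real.sqrt Real.pi * Real.sqrt n :=
      Real.sqrt_mul Real.pi_pos.le _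
    have hsn : (1:ℝ) ≤ Real.sqrt n := by
      rw [show (1:ℝ) = Real.sqrt 1 by simp]
      exact Real.sqrt_le_sqrt hn0
    have hsq : Real.sqrt n ^ 2 = (n:ℝ) := Real.sq_sqrt (by linarith)
    have h4 : (0:ℝ) < 4 ^ n := by positivity
    rw [gg, inv_div, hs]
    rw [div_le_iff₀ h4]
    have : (1/4:ℝ)^n * 4 ^ n = 1 := by
      rw [div_pow, one_pow, div_mul_cancel₀]
      positivity
    calc (n:ℝ) * (Real.sqrt Real.pi * Real.sqrt n)
        = Real.sqrt Real.pi * ((n:ℝ) * Real.sqrt n) := by ring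
      _ ≤ Real.sqrt Real.pi * ((n:ℝ) * n) := by
          have hsl : Real.sqrt n ≤ (n:ℝ) := by nlinarith [Real.sqrt_nonneg (n:ℝ)]
          gcongr
      _ = Real.sqrt Real.pi * ((n:ℝ)^2 * (1/4:ℝ)^n) * 4 ^ n := by
          rw [mul_assoc (Real.sqrt Real.pi), mul_assoc ((n:ℝ)^2), this, mul_one]
          ring
  have h0 : Tendsto (fun n => (gg n)⁻¹) atTop (𝓝[>] 0) := by
    rw [tendsto_nhdsWithin_iff]
    constructor
    · apply squeeze_zero' ?_ hb h2
      filter_upwards with n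
      exact inv_nonneg.mpr (gg_nonneg n)
    · filter_upwards [eventually_ge_atTop 1] with n hn
      exact Set.mem_Ioi.mpr (inv_pos.mpr (gg_pos hn))
  have := h0.inv_tendsto_nhdsGT_zero
  simpa [Pi.inv_def] using this

lemma tendsto_sum_gg_atTop :
    Tendsto (fun n => ∑ k ∈ Finset.range n, gg k) atTop atTop := by
  apply tendsto_atTop_mono' atTop
    (show ∀ᶠ n : ℕ in atTop, gg (n - 1) ≤ ∑ k ∈ Finset.range n, gg k from ?_)
    (tendsto_gg_atTop.comp (tendsto_sub_atTop_nat 1))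
  filter_upwards [eventually_ge_atTop 1] with n hn
  exact Finset.single_le_sum (fun i _ => gg_nonneg i)
    (Finset.mem_range.mpr (by omega))

theorem key_eq (n : ℕ) (hn : 1 ≤ n) :
    (catalan n : ℝ) / gg n =
      Stirling.stirlingSeq (2 * n) / (Stirling.stirlingSeq n) ^ 2 *
        (Real.sqrt Real.pi * (n / (n + 1))) := by
  have hn0 : (0:ℝ) < n := by exact_mod_cast hn
  have hπ : (0:ℝ) < Real.pi := Real.pi_pos
  have hsn : 0 < Stirling.stirlingSeq n := by
    obtain ⟨m, rfl⟩ : ∃ m, n = m + 1 := ⟨n - 1, by omega⟩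
    exact Stirling.stirlingSeq'_pos m
  have hs2n : 0 < Stirling.stirlingSeq (2 * n) := by
    obtain ⟨m, hm⟩ : ∃ m, 2 * n = m + 1 := ⟨2 * n - 1, by omega⟩
    rw [hm]; exact Stirling.stirlingSeq'_pos m
  have hP : (0:ℝ) < ((n:ℝ) / Real.exp 1) ^ n := by positivity
  have h1 : ((n ! : ℕ) : ℝ) ^ 2 = (Stirling.stirlingSeq n) ^ 2 * (2 * n) * (((n:ℝ) / Real.exp 1) ^ n) ^ 2 := by
    have hd : (0:ℝ) < Real.sqrt (2 * n) * ((n:ℝ) / Real.exp 1) ^ n := by positivity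
    have he : ((n ! : ℕ) : ℝ) = Stirling.stirlingSeq n * (Real.sqrt (2 * n) * ((n:ℝ) / Real.exp 1) ^ n) := by
      rw [Stirling.stirlingSeq, div_mul_cancel₀]
      exact hd.ne'
    rw [he, mul_pow, mul_pow, Real.sq_sqrt (by positivity)]
    ring
  have h2 : (((2 * n)! : ℕ) : ℝ) ^ 2 = (Stirling.stirlingSeq (2 * n)) ^ 2 * (4 * n) *
      (16 ^ n * (((n:ℝ) / Real.exp 1) ^ n) ^ 4) := by
    have hd : (0:ℝ) < Real.sqrt (2 * (2 * n : ℕ)) * (((2 * n : ℕ):ℝ) / Real.exp 1) ^ (2 * n) := by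
      positivity
    have he : (((2 * n)! : ℕ) : ℝ) = Stirling.stirlingSeq (2 * n) *
        (Real.sqrt (2 * (2 * n : ℕ)) * (((2 * n : ℕ):ℝ) / Real.exp 1) ^ (2 * n)) := by
      rw [Stirling.stirlingSeq, div_mul_cancel₀]
      exact hd.ne'
    rw [he]
    have hcast : (((2 * n : ℕ)):ℝ) = 2 * (n:ℝ) := by push_cast; ring
    rw [hcast]
    have hpow : ((2 * (n:ℝ)) / Real.exp 1) ^ (2 * n) = 4 ^ n * (((n:ℝ) / Real.exp 1) ^ n) ^ 2 := by
      rw [mul_div_assoc, mul_pow, pow_mul, pow_mul]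
      norm_num
      rw [← pow_mul, ← pow_mul, mul_comm n 2]
    rw [hpow, mul_pow, mul_pow, Real.sq_sqrt (by positivity), mul_pow,
      show (16:ℝ)^n = 4^(n*2) from by rw [mul_comm, pow_mul]; norm_num]
    ring
  have h3 : (n.centralBinom : ℝ) * ((n ! : ℕ) : ℝ) * ((n ! : ℕ) : ℝ) = (((2 * n)! : ℕ) : ℝ) := by
    have := Nat.choose_mul_factorial_mul_factorial (by omega : n ≤ 2 * n)
    rw [Nat.centralBinom]
    exact_mod_cast congrArg (Nat.cast (R := ℝ)) (by simpa [two_mul, Nat.add_sub_cancel] using this)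
  have h4 : ((n:ℝ) + 1) * (catalan n : ℝ) = (n.centralBinom : ℝ) := by
    exact_mod_cast congrArg (Nat.cast (R := ℝ)) (succ_mul_catalan_eq_centralBinom n)
  have hF : (0:ℝ) < ((n ! : ℕ) : ℝ) := by exact_mod_cast Nat.factorial_pos n
  have hgg : 0 < gg n := by unfold gg; positivity
  have hlhs : 0 ≤ (catalan n : ℝ) / gg n := by positivity
  have hrhs : 0 ≤ Stirling.stirlingSeq (2 * n) / (Stirling.stirlingSeq n) ^ 2 *
        (Real.sqrt Real.pi * ((n:ℝ) / ((n:ℝ) + 1))) := by positivity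
  rw [← Real.sqrt_sq hlhs, ← Real.sqrt_sq hrhs]
  congr 1
  have hcatsq : (catalan n : ℝ) ^ 2 =
      (Stirling.stirlingSeq (2 * n)) ^ 2 * 16 ^ n /
        ((Stirling.stirlingSeq n) ^ 4 * n * ((n:ℝ) + 1) ^ 2) := by
    have hcb : (n.centralBinom : ℝ) ^ 2 * (((n ! : ℕ)) : ℝ) ^ 2 * (((n ! : ℕ)) : ℝ) ^ 2
        = (((2 * n)! : ℕ) : ℝ) ^ 2 := by
      rw [← h3]; ring
    rw [h1, h2, ← h4] at hcb
    rw [eq_div_iff (by positivity)]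
    apply mul_right_cancel₀ (b := 4 * (n:ℝ) * (((n:ℝ) / Real.exp 1) ^ n) ^ 4) (by positivity)
    linear_combination hcb
  have hggsq : (gg n) ^ 2 = 16 ^ n / ((n:ℝ) ^ 2 * (Real.pi * n)) := by
    unfold gg
    rw [div_pow, mul_pow, Real.sq_sqrt (by positivity)]
    rw [show ((4:ℝ)^n)^2 = 16 ^ n by rw [← pow_mul, mul_comm, pow_mul]; norm_num]
  rw [div_pow, hcatsq, hggsq, mul_pow, mul_pow, div_pow, div_pow, Real.sq_sqrt hπ.le]
  field_simp

lemma tendsto_catalan_div_gg :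
    Tendsto (fun n => (catalan n : ℝ) / gg n) atTop (𝓝 1) := by
  have t1 : Tendsto (fun n : ℕ => Stirling.stirlingSeq (2 * n)) atTop (𝓝 (Real.sqrt Real.pi)) :=
    Stirling.tendsto_stirlingSeq_sqrt_pi.comp (tendsto_id.const_mul_atTop' two_pos)
  have t2 : Tendsto (fun n : ℕ => (Stirling.stirlingSeq n) ^ 2) atTop (𝓝 (Real.sqrt Real.pi ^ 2)) :=
    Stirling.tendsto_stirlingSeq_sqrt_pi.pow 2
  have hπ : (0:ℝ) < Real.pi := Real.pi_pos
  have hne : Real.sqrt Real.pi ^ 2 ≠ 0 := by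
    rw [Real.sq_sqrt hπ.le]; exact hπ.ne'
  have t3 : Tendsto (fun n : ℕ => (n:ℝ)/((n:ℝ)+1)) atTop (𝓝 1) := tendsto_natCast_div_add_atTop 1
  have tL : Tendsto (fun n : ℕ => Stirling.stirlingSeq (2 * n) / (Stirling.stirlingSeq n) ^ 2 *
      (Real.sqrt Real.pi * ((n:ℝ) / ((n:ℝ) + 1)))) atTop
      (𝓝 (Real.sqrt Real.pi / Real.sqrt Real.pi ^ 2 * (Real.sqrt Real.pi * 1))) :=
    (t1.div t2 hne).mul (tendsto_const_nhds.mul t3)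
  have hval : Real.sqrt Real.pi / Real.sqrt Real.pi ^ 2 * (Real.sqrt Real.pi * 1) = 1 := by
    rw [Real.sq_sqrt hπ.le, mul_one]
    rw [div_mul_eq_mul_div, Real.mul_self_sqrt hπ.le, div_self hπ.ne']
  rw [hval] at tL
  apply tL.congr'
  filter_upwards [eventually_ge_atTop 1] with n hn
  exact (key_eq n hn).symm

lemma catalan_isEquivalent_gg :
    (fun n => (catalan n : ℝ)) ~[atTop] gg := by
  apply Asymptotics.isEquivalent_of_tendsto_one tendsto_catalan_div_gg

noncomputable def vv (k : ℕ) : ℝ := (4/3) * (gg k - gg (k - 1))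

lemma sum_vv (n : ℕ) : ∑ k ∈ Finset.range (n + 1), vv k = (4/3) * gg n := by
  rw [Finset.sum_range_succ']
  have h0 : vv 0 = 0 := by simp [vv]
  rw [h0, add_zero]
  have : ∀ i : ℕ, vv (i + 1) = (4/3) * (gg (i+1) - gg i) := by
    intro i; simp [vv]
  simp_rw [this]
  rw [← Finset.mul_sum, Finset.sum_range_sub (f := gg), gg_zero, sub_zero]

lemma tendsto_vv_div_gg : Tendsto (fun k => vv k / gg k) atTop (𝓝 1) := by
  -- ratio gg k / gg (k+1) → 1/4
  have hw : Tendsto (fun k : ℕ => ((k:ℝ)+1)/(k:ℝ)) atTop (𝓝 1) := by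
    have := (tendsto_natCast_div_add_atTop (1:ℝ)).inv₀ one_ne_zero
    simp only [inv_one] at this
    apply this.congr'
    filter_upwards [eventually_ge_atTop 1] with k hk
    rw [inv_div]
  have hsw : Tendsto (fun k : ℕ => Real.sqrt (((k:ℝ)+1)/(k:ℝ))) atTop (𝓝 1) := by
    have := (Real.continuous_sqrt.tendsto 1).comp hw
    simpa only [Function.comp_def, Real.sqrt_one] using this
  have hr : Tendsto (fun k : ℕ => gg k / gg (k + 1)) atTop (𝓝 (1/4)) := by
    have heq : ∀ᶠ k : ℕ in atTop, (1/4 : ℝ) * (((k:ℝ)+1)/(k:ℝ) * Real.sqrt (((k:ℝ)+1)/(k:ℝ)))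
        = gg k / gg (k + 1) := by
      filter_upwards [eventually_ge_atTop 1] with k hk
      have hk0 : (0:ℝ) < k := by exact_mod_cast hk
      have hπ : (0:ℝ) < Real.pi := Real.pi_pos
      have hsqrtdiv : Real.sqrt (((k:ℝ)+1)/(k:ℝ)) =
          Real.sqrt (Real.pi * ((k:ℝ)+1)) / Real.sqrt (Real.pi * k) := by
        rw [← Real.sqrt_div (by positivity)]
        congr 1
        field_simp
      rw [hsqrtdiv, gg, gg]
      have hc : ((k+1 : ℕ) : ℝ) = (k:ℝ)+1 := by push_cast; ring
      rw [hc]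
      have h1 : (0:ℝ) < Real.sqrt (Real.pi * k) := Real.sqrt_pos.mpr (by positivity)
      have h2 : (0:ℝ) < Real.sqrt (Real.pi * ((k:ℝ)+1)) := Real.sqrt_pos.mpr (by positivity)
      have h3 : (0:ℝ) < (4:ℝ) ^ k := by positivity
      rw [pow_succ]
      field_simp
    have : Tendsto (fun k : ℕ => (1/4 : ℝ) * (((k:ℝ)+1)/(k:ℝ) * Real.sqrt (((k:ℝ)+1)/(k:ℝ))))
        atTop (𝓝 ((1/4) * (1 * 1))) := tendsto_const_nhds.mul (hw.mul hsw)
    rw [show (1/4 : ℝ) * (1 * 1) = 1/4 by norm_num] at this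
    exact this.congr' heq
  -- shifted version
  have hshift : Tendsto (fun k => vv (k + 1) / gg (k + 1)) atTop (𝓝 1) := by
    have heq : ∀ k : ℕ, vv (k + 1) / gg (k + 1) = (4/3) * (1 - gg k / gg (k+1)) := by
      intro k
      have hne : gg (k+1) ≠ 0 := (gg_pos (by omega)).ne'
      simp only [vv, Nat.add_sub_cancel]
      rw [mul_div_assoc, sub_div, div_self hne]
    simp_rw [heq]
    have : Tendsto (fun k : ℕ => (4/3 : ℝ) * (1 - gg k / gg (k+1))) atTop
        (𝓝 ((4/3) * (1 - 1/4))) := tendsto_const_nhds.mul (tendsto_const_nhds.sub hr)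
    rw [show (4/3 : ℝ) * (1 - 1/4) = 1 by norm_num] at this
    exact this
  exact (tendsto_add_atTop_iff_nat 1).mp hshift

lemma vv_isEquivalent_gg : vv ~[atTop] gg := by
  apply Asymptotics.isEquivalent_of_tendsto_one tendsto_vv_div_gg

lemma sum_catalan_isEquivalent :
    (fun n => ∑ k ∈ Finset.range n, (catalan k : ℝ)) ~[atTop]
      (fun n => ∑ k ∈ Finset.range n, vv k) := by
  have h1 : (fun n => ∑ k ∈ Finset.range n, (catalan k : ℝ)) ~[atTop]
      (fun n => ∑ k ∈ Finset.range n, gg k) := by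
    have := catalan_isEquivalent_gg.isLittleO.sum_range gg_nonneg tendsto_sum_gg_atTop
    have heq : (fun n => ∑ k ∈ Finset.range n, ((catalan k : ℝ) - gg k)) =
        (fun n => ∑ k ∈ Finset.range n, (catalan k : ℝ)) - (fun n => ∑ k ∈ Finset.range n, gg k) := by
      funext n
      simp [Finset.sum_sub_distrib]
    rw [Asymptotics.IsEquivalent]
    simp only [Pi.sub_apply] at this
    rw [heq] at this
    exact this
  have h2 : (fun n => ∑ k ∈ Finset.range n, vv k) ~[atTop]
      (fun n => ∑ k ∈ Finset.range n, gg k) := by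
    have := vv_isEquivalent_gg.isLittleO.sum_range gg_nonneg tendsto_sum_gg_atTop
    have heq : (fun n => ∑ k ∈ Finset.range n, (vv k - gg k)) =
        (fun n => ∑ k ∈ Finset.range n, vv k) - (fun n => ∑ k ∈ Finset.range n, gg k) := by
      funext n
      simp [Finset.sum_sub_distrib]
    rw [Asymptotics.IsEquivalent]
    simp only [Pi.sub_apply] at this
    rw [heq] at this
    exact this
  exact h1.trans h2.symm

theorem catalan_partial_sum_equivalent :
    Filter.Tendsto
      (fun n : ℕ =>
        (∑ k ∈ Finset.range (n + 1), (catalan k : ℝ)) /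
          (4 ^ (n + 1) / (3 * n * Real.sqrt (Real.pi * n))))
      Filter.atTop (nhds 1) := by
  have he : (fun n : ℕ => ∑ k ∈ Finset.range (n+1), (catalan k : ℝ)) ~[atTop]
      (fun n : ℕ => (4/3) * gg n) := by
    rw [Asymptotics.IsEquivalent]
    have h := sum_catalan_isEquivalent.isLittleO.comp_tendsto (tendsto_add_atTop_nat 1)
    apply Asymptotics.IsLittleO.congr' h
    · apply Filter.Eventually.of_forall
      intro n
      simp only [Function.comp_apply, Pi.sub_apply, sum_vv n]
    · apply Filter.Eventually.of_forall
      intro n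
      simp only [Function.comp_apply, sum_vv n]
  have ht : Tendsto (fun n : ℕ => (∑ k ∈ Finset.range (n+1), (catalan k : ℝ)) / ((4/3) * gg n))
      atTop (𝓝 1) := by
    refine (Asymptotics.isEquivalent_iff_tendsto_one ?_).mp he
    filter_upwards [eventually_ge_atTop 1] with n hn
    exact mul_ne_zero (by norm_num) (gg_pos hn).ne'
  apply ht.congr
  intro n
  congr 1
  rcases Nat.eq_zero_or_pos n with rfl | hn
  · simp [gg]
  · have hn0 : (0:ℝ) < n := by exact_mod_cast hn
    have hs : (0:ℝ) < Real.sqrt (Real.pi * n) := Real.sqrt_pos.mpr (by positivity)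
    rw [gg, pow_succ]
    field_simp
end

section
/- Let p be an odd prime and let q = p^r be a power of p (r ≥ 1). Then in the polynomial ring (ℤ/pℤ)[X] one has ∑_{k=0}^{q-1} C(2k,k)·X^k = (1 − 4X)^{(q-1)/2}, where each central binomial coefficient C(2k,k) is reduced modulo p. -/
section
open Finset Nat

lemma sym_sum (n : ℕ) :
    2 * ∑ i ∈ range (n+1), (i : ℤ) * centralBinom i * centralBinom (n - i)
      = n * ∑ i ∈ range (n+1), (centralBinom i * centralBinom (n - i) : ℤ) := by
  have h := Finset.sum_range_reflect
    (fun i => (i : ℤ) * centralBinom i * centralBinom (n - i)) (n+1)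
  simp only [Nat.add_sub_cancel] at h
  have key : ∀ i ∈ range (n+1),
      ((n - i : ℕ) : ℤ) * centralBinom (n - i) * centralBinom (n - (n - i))
        = ((n : ℤ) - i) * centralBinom (n - i) * centralBinom i := by
    intro i hi
    rw [Finset.mem_range] at hi
    have hi' : i ≤ n := Nat.lt_succ_iff.mp hi
    rw [Nat.sub_sub_self hi', Nat.cast_sub hi']
  rw [Finset.sum_congr rfl key] at h
  have : (2 : ℤ) * ∑ i ∈ range (n+1), (i : ℤ) * centralBinom i * centralBinom (n - i)
      = ∑ i ∈ range (n+1), ((i : ℤ) * centralBinom i * centralBinom (n - i)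
        + ((n : ℤ) - i) * centralBinom (n - i) * centralBinom i) := by
    rw [Finset.sum_add_distrib, ← h]
    ring
  rw [this, Finset.mul_sum]
  apply Finset.sum_congr rfl
  intro i _
  ring

lemma convo (n : ℕ) :
    ∑ i ∈ range (n+1), (centralBinom i * centralBinom (n - i) : ℤ) = 4 ^ n := by
  induction n with
  | zero => simp [centralBinom]
  | succ n ih =>
    have hA := sym_sum (n+1)
    have hC := sym_sum n
    push_cast at hA
    have hrec : ∀ i : ℕ, ((i:ℤ)+1) * centralBinom (i+1) = 2 * (2*i+1) * centralBinom i := by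
      intro i
      have h := congrArg (Nat.cast : ℕ → ℤ) (Nat.succ_mul_centralBinom_succ i)
      push_cast at h
      linarith
    have hB : ∑ i ∈ range (n+2), (i : ℤ) * centralBinom i * centralBinom (n + 1 - i)
        = 4 * (∑ i ∈ range (n+1), (i : ℤ) * centralBinom i * centralBinom (n - i))
          + 2 * ∑ i ∈ range (n+1), (centralBinom i * centralBinom (n - i) : ℤ) := by
      rw [Finset.sum_range_succ' (fun i => (i : ℤ) * centralBinom i * centralBinom (n + 1 - i)) (n+1)]
      simp only [Nat.succ_sub_succ, Nat.cast_zero, zero_mul, add_zero, Nat.cast_add,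
        Nat.cast_one]
      have e2 : ∀ i ∈ range (n+1), ((i:ℤ)+1) * centralBinom (i+1) * centralBinom (n - i)
          = 2 * (2*(i:ℤ)+1) * centralBinom i * centralBinom (n - i) := by
        intro i _; rw [hrec i]
      rw [Finset.sum_congr rfl e2]
      rw [Finset.mul_sum, Finset.mul_sum, ← Finset.sum_add_distrib]
      apply Finset.sum_congr rfl
      intro i _; ring
    have hne : ((n:ℤ)+1) ≠ 0 := by positivity
    have hfin : ((n:ℤ)+1) * ∑ i ∈ range (n+2), (centralBinom i * centralBinom (n+1-i) : ℤ)
        = ((n:ℤ)+1) * (4 * ∑ i ∈ range (n+1), (centralBinom i * centralBinom (n-i) : ℤ)) := by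
      push_cast
      nlinarith [hA, hB, hC]
    have := mul_left_cancel₀ hne hfin
    rw [this, ih]
    ring


end

theorem central_binomial_polynomial_mod_p
    (p : ℕ) (hp : p.Prime) (hodd : Odd p) (r : ℕ) (hr : 1 ≤ r) (q : ℕ) (hq : q = p ^ r) :
    ∑ k ∈ Finset.range q, Polynomial.C (((2 * k).choose k : ZMod p)) * Polynomial.X ^ k =
      (1 - 4 * Polynomial.X : Polynomial (ZMod p)) ^ ((q - 1) / 2) := by
  haveI : Fact p.Prime := ⟨hp⟩
  have hp2 : p ≠ 2 := by rintro rfl; simp [Nat.odd_iff] at hodd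
  have hqodd : Odd q := hq ▸ hodd.pow
  have hq1 : 1 ≤ q := by
    rw [hq]; exact Nat.one_le_pow _ _ hp.pos
  have hp3 : 3 ≤ p := by
    have := hp.two_le; omega
  have hq3 : 3 ≤ q := by
    rw [hq]; exact le_trans hp3 (Nat.le_self_pow (by omega) p)
  set m := (q - 1) / 2 with hm
  have hm2 : 2 * m + 1 = q := by
    obtain ⟨t, ht⟩ := hqodd
    omega
  set F : Polynomial (ZMod p) :=
    ∑ k ∈ Finset.range q, Polynomial.C (((2 * k).choose k : ZMod p)) * Polynomial.X ^ k with hF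
  set G : Polynomial (ZMod p) := (1 - 4 * Polynomial.X) ^ m with hG
  -- coefficients of F
  have hcoeffF : ∀ i, F.coeff i = if i < q then (((2 * i).choose i : ℕ) : ZMod p) else 0 := by
    intro i
    rw [hF, Polynomial.finset_sum_coeff]
    simp only [Polynomial.coeff_C_mul, Polynomial.coeff_X_pow, mul_ite, mul_one, mul_zero]
    rw [Finset.sum_ite_eq (Finset.range q) i (fun k => (((2 * k).choose k : ℕ) : ZMod p))]
    simp [Finset.mem_range]
  -- key 1 : X^q ∣ (1-4X) F^2 - 1
  have hF2coeff : ∀ d < q, (F ^ 2).coeff d = (4 : ZMod p) ^ d := by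
    intro d hd
    rw [sq, Polynomial.coeff_mul,
      Finset.Nat.sum_antidiagonal_eq_sum_range_succ_mk (fun x => F.coeff x.1 * F.coeff x.2) d]
    have : ∀ k ∈ Finset.range (d+1),
        F.coeff k * F.coeff (d - k)
          = ((Nat.centralBinom k * Nat.centralBinom (d - k) : ℤ) : ZMod p) := by
      intro k hk
      rw [Finset.mem_range] at hk
      rw [hcoeffF, hcoeffF, if_pos (by omega), if_pos (by omega)]
      push_cast [Nat.centralBinom]
      ring
    rw [Finset.sum_congr rfl this, ← Int.cast_sum, convo d]
    push_cast
    ring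
  have key1 : Polynomial.X ^ q ∣ (1 - 4 * Polynomial.X) * F ^ 2 - 1 := by
    rw [Polynomial.X_pow_dvd_iff]
    intro d hd
    have expand : (1 - 4 * Polynomial.X) * F ^ 2 - 1
        = F ^ 2 - 4 * (Polynomial.X * F ^ 2) - 1 := by ring
    rw [expand]
    rcases d with _ | e
    · simp [hF2coeff 0 (by omega)]
    · have h1 : (Polynomial.X * F ^ 2).coeff (e+1) = (F ^ 2).coeff e :=
        Polynomial.coeff_X_mul (F ^ 2) e
      simp only [Polynomial.coeff_sub, Polynomial.coeff_ofNat_mul, h1, Polynomial.coeff_one,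
        hF2coeff (e+1) hd, hF2coeff e (by omega)]
      rw [if_neg (by omega)]
      ring
  -- key 2 : (1-4X) G^2 - 1 = -4 X^q
  have key2 : (1 - 4 * Polynomial.X : Polynomial (ZMod p)) ^ q
      = 1 - 4 * Polynomial.X ^ q := by
    have hchar : CharP (Polynomial (ZMod p)) p := by infer_instance
    rw [hq, sub_pow_char_pow]
    rw [one_pow, mul_pow]
    congr 1
    have h4 : ((4 : Polynomial (ZMod p))) = Polynomial.C (4 : ZMod p) :=
      (map_ofNat Polynomial.C 4).symm
    rw [h4, ← Polynomial.C_pow, ZMod.pow_card_pow]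
  have key2' : (1 - 4 * Polynomial.X) * G ^ 2 - 1 = -(4 * Polynomial.X ^ q) := by
    rw [hG, ← pow_mul, ← pow_succ']
    rw [show m * 2 + 1 = q by omega, key2]
    ring
  -- combine
  have hdvd : Polynomial.X ^ q ∣ (1 - 4 * Polynomial.X) * ((F + G) * (F - G)) := by
    have : (1 - 4 * Polynomial.X) * ((F + G) * (F - G))
        = ((1 - 4 * Polynomial.X) * F ^ 2 - 1) - ((1 - 4 * Polynomial.X) * G ^ 2 - 1) := by
      ring
    rw [this, key2']
    exact dvd_sub key1 ⟨-4, by ring⟩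
  have hXprime : Prime (Polynomial.X : Polynomial (ZMod p)) := Polynomial.prime_X
  have hnd1 : ¬ (Polynomial.X : Polynomial (ZMod p)) ∣ (1 - 4 * Polynomial.X) := by
    rw [Polynomial.X_dvd_iff]
    simp
  have hGzero : G.coeff 0 = 1 := by
    rw [hG, Polynomial.coeff_zero_eq_eval_zero]
    simp
  have hFzero : F.coeff 0 = 1 := by
    rw [hcoeffF, if_pos (by omega)]
    simp
  have hnd2 : ¬ (Polynomial.X : Polynomial (ZMod p)) ∣ (F + G) := by
    rw [Polynomial.X_dvd_iff]
    simp only [Polynomial.coeff_add, hFzero, hGzero]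
    intro h
    have : ((2 : ℕ) : ZMod p) = 0 := by push_cast; linear_combination h
    rw [ZMod.natCast_eq_zero_iff] at this
    have := (Nat.prime_dvd_prime_iff_eq hp Nat.prime_two).mp this
    exact hp2 this
  have hdvd2 : Polynomial.X ^ q ∣ (F - G) := by
    have h1 := hXprime.pow_dvd_of_dvd_mul_left q hnd1 hdvd
    exact hXprime.pow_dvd_of_dvd_mul_left q hnd2 h1
  -- degree bound
  have hdegF : F.natDegree ≤ q - 1 := by
    rw [hF]
    apply Polynomial.natDegree_sum_le_of_forall_le
    intro k hk
    rw [Finset.mem_range] at hk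
    calc (Polynomial.C (((2 * k).choose k : ℕ) : ZMod p) * Polynomial.X ^ k).natDegree
        ≤ (Polynomial.X ^ k : Polynomial (ZMod p)).natDegree := Polynomial.natDegree_C_mul_le _ _
      _ ≤ k := by rw [Polynomial.natDegree_X_pow]
      _ ≤ q - 1 := by omega
  have hdegG : G.natDegree ≤ q - 1 := by
    rw [hG]
    calc ((1 - 4 * Polynomial.X : Polynomial (ZMod p)) ^ m).natDegree
        ≤ m * (1 - 4 * Polynomial.X : Polynomial (ZMod p)).natDegree :=
          Polynomial.natDegree_pow_le
      _ ≤ m * 1 := by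
          apply Nat.mul_le_mul_left
          apply Polynomial.natDegree_le_iff_coeff_eq_zero.mpr
          intro d hd
          simp only [Polynomial.coeff_sub, Polynomial.coeff_one, Polynomial.coeff_ofNat_mul,
            Polynomial.coeff_X]
          rw [if_neg (by omega), if_neg (by omega)]
          ring
      _ ≤ q - 1 := by omega
  have hsub : F - G = 0 := by
    by_contra hne
    have := Polynomial.natDegree_le_of_dvd hdvd2 hne
    rw [Polynomial.natDegree_X_pow] at this
    have := Polynomial.natDegree_sub_le F G
    omega
  have := sub_eq_zero.mp hsub
  rw [hF, hG] at this
  exact this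
end

section
/- Let p be an odd prime and let q = p^r be a power of p (r ≥ 1). Then in the polynomial ring (ℤ/pℤ)[X] one has 2X · (∑_{k=0}^{q-1} C_k·X^k) = 1 − (1 − 4X)^{(q+1)/2} − 2X^q, where each Catalan number C_k is reduced modulo p. (Equivalently, ∑_{k=0}^{q-1} C_k x^k ≡ (1 − (1−4x)^{(q+1)/2})/(2x) − x^{q-1} mod p.) -/
open Finset Polynomial

theorem catalan_polynomial_mod_p
    (p : ℕ) (hp : p.Prime) (hodd : Odd p) (r : ℕ) (hr : 1 ≤ r) (q : ℕ) (hq : q = p ^ r) :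
    2 * Polynomial.X *
        ∑ k ∈ Finset.range q, Polynomial.C ((catalan k : ZMod p)) * Polynomial.X ^ k =
      1 - (1 - 4 * Polynomial.X : Polynomial (ZMod p)) ^ ((q + 1) / 2)
        - 2 * Polynomial.X ^ q := by
  haveI : Fact p.Prime := ⟨hp⟩
  set S : (ZMod p)[X] := ∑ k ∈ Finset.range q, Polynomial.C ((catalan k : ZMod p)) * Polynomial.X ^ k with hS
  have hq1 : 1 ≤ q := by subst hq; exact Nat.one_le_pow _ _ hp.pos
  have hqodd : Odd q := by subst hq; exact hodd.pow
  have hM : 2 * ((q + 1) / 2) = q + 1 := by obtain ⟨m, hm⟩ := hqodd; omega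
  -- coefficients of S
  have hcoeffS : ∀ i, S.coeff i = if i < q then (catalan i : ZMod p) else 0 := by
    intro i
    rw [hS, Polynomial.finset_sum_coeff]
    simp only [Polynomial.coeff_C_mul, Polynomial.coeff_X_pow]
    by_cases h : i < q
    · rw [if_pos h, Finset.sum_eq_single i]
      · simp
      · intro b _ hb; simp [Ne.symm hb]
      · intro hmem; exact absurd (Finset.mem_range.mpr h) hmem
    · rw [if_neg h]
      apply Finset.sum_eq_zero
      intro b hb
      rw [Finset.mem_range] at hb
      have h2 : ¬ (i = b) := by omega
      simp [h2]
  -- key recurrence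
  have hA : (X : (ZMod p)[X]) ^ q ∣ 1 + X * S ^ 2 - S := by
    rw [Polynomial.X_pow_dvd_iff]
    intro d hd
    simp only [Polynomial.coeff_sub, Polynomial.coeff_add]
    rcases d with _ | e
    · simp [Polynomial.mul_coeff_zero, hcoeffS, show 0 < q from hq1]
    · have h1 : (1 : (ZMod p)[X]).coeff (e + 1) = 0 := by
        simp [Polynomial.coeff_one]
      rw [h1, sq, Polynomial.coeff_X_mul, Polynomial.coeff_mul, hcoeffS]
      rw [if_pos hd, zero_add]
      have hterm : ∀ ij ∈ Finset.HasAntidiagonal.antidiagonal e, S.coeff ij.1 * S.coeff ij.2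
          = ((catalan ij.1 * catalan ij.2 : ℕ) : ZMod p) := by
        intro ij hij
        rw [Finset.HasAntidiagonal.mem_antidiagonal] at hij
        have h1 : ij.1 < q := by omega
        have h2 : ij.2 < q := by omega
        rw [hcoeffS, hcoeffS, if_pos h1, if_pos h2]
        push_cast; ring
      rw [Finset.sum_congr rfl hterm, ← Nat.cast_sum, ← catalan_succ']
      exact sub_self _
  -- X^(q+1) divides (1-2XS)^(q+1) - (1-4X)^((q+1)/2)
  have hdvd1 : (X : (ZMod p)[X]) ^ (q + 1) ∣
      (1 - 2 * X * S) ^ (q + 1) - (1 - 4 * X) ^ ((q + 1) / 2) := by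
    have h2 : (1 - 2 * X * S) ^ (q + 1) = ((1 - 2 * X * S) ^ 2) ^ ((q + 1) / 2) := by
      rw [← pow_mul, hM]
    rw [h2]
    have hd : (X : (ZMod p)[X]) ^ (q + 1) ∣ (1 - 2 * X * S) ^ 2 - (1 - 4 * X) := by
      obtain ⟨c, hc⟩ := hA
      refine ⟨4 * c, ?_⟩
      have : (1 - 2 * X * S) ^ 2 - (1 - 4 * X) = 4 * (X * (1 + X * S ^ 2 - S)) := by ring
      rw [this, hc]; ring
    exact dvd_trans hd (sub_dvd_pow_sub_pow _ _ _)
  -- Frobenius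
  have hfrob : ∀ f : (ZMod p)[X], f ^ q = Polynomial.expand (ZMod p) q f := by
    intro f
    have h := Polynomial.map_iterateFrobenius_expand p f r
    have hid : iterateFrobenius (ZMod p) p r = RingHom.id (ZMod p) := by
      ext x; rw [iterateFrobenius_def, ZMod.pow_card_pow, RingHom.id_apply]
    rw [hid, Polynomial.map_id] at h
    rw [hq, ← h]
  -- expand q S ≡ 1 mod X^q
  have hES : (X : (ZMod p)[X]) ^ q ∣ Polynomial.expand (ZMod p) q S - 1 := by
    rw [Polynomial.X_pow_dvd_iff]
    intro d hd
    rw [Polynomial.coeff_sub, Polynomial.coeff_expand hq1]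
    rcases Nat.eq_zero_or_pos d with hd0 | hdpos
    · subst hd0
      simp [hcoeffS, show 0 < q from hq1]
    · have : ¬ q ∣ d := by
        intro hdvd
        have := Nat.le_of_dvd hdpos hdvd
        omega
      rw [if_neg this, Polynomial.coeff_one, if_neg (by omega)]
      simp
  -- (1 - 2XS)^q = 1 - 2 X^q (expand q S)
  have hpowq : (1 - 2 * X * S) ^ q
      = 1 - 2 * X ^ q * Polynomial.expand (ZMod p) q S := by
    rw [hfrob]
    simp [map_sub, map_mul, map_pow, map_one, map_ofNat, Polynomial.expand_X]
  -- X^(q+1) ∣ (1-2XS)^(q+1) - (1 - 2XS - 2X^q + 4X^(q+1)S ... ) handled by: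
  have hdvd2 : (X : (ZMod p)[X]) ^ (q + 1) ∣
      (1 - 2 * X * S) ^ (q + 1) - (1 - 2 * X * S - 2 * X ^ q) := by
    have hexp : (1 - 2 * X * S) ^ (q + 1)
        = (1 - 2 * X ^ q * Polynomial.expand (ZMod p) q S) * (1 - 2 * X * S) := by
      rw [pow_succ, hpowq]
    rw [hexp]
    obtain ⟨c, hc⟩ := hES
    have : (1 - 2 * X ^ q * Polynomial.expand (ZMod p) q S) * (1 - 2 * X * S)
        - (1 - 2 * X * S - 2 * X ^ q)
        = -2 * X ^ q * (Polynomial.expand (ZMod p) q S - 1) * (1 - 2 * X * S)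
          + 4 * X ^ (q + 1) * S := by ring
    rw [this, hc]
    refine ⟨-2 * X ^ (q - 1) * c * (1 - 2 * X * S) + 4 * S, ?_⟩
    have hXq : (X : (ZMod p)[X]) ^ q * X ^ q = X ^ (q + 1) * X ^ (q - 1) := by
      rw [← pow_add, ← pow_add]
      congr 1
      omega
    calc -2 * X ^ q * (X ^ q * c) * (1 - 2 * X * S) + 4 * X ^ (q + 1) * S
        = (X ^ q * X ^ q) * (-2 * c * (1 - 2 * X * S)) + X ^ (q + 1) * (4 * S) := by ring
      _ = X ^ (q + 1) * (-2 * X ^ (q - 1) * c * (1 - 2 * X * S) + 4 * S) := by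
          rw [hXq]; ring
  -- combine: X^(q+1) ∣ G - (1-4X)^M
  have hdvd3 : (X : (ZMod p)[X]) ^ (q + 1) ∣
      (1 - 2 * X * S - 2 * X ^ q) - (1 - 4 * X) ^ ((q + 1) / 2) := by
    have := dvd_sub hdvd1 hdvd2
    have heq : (1 - 2 * X * S) ^ (q + 1) - (1 - 4 * X) ^ ((q + 1) / 2)
        - ((1 - 2 * X * S) ^ (q + 1) - (1 - 2 * X * S - 2 * X ^ q))
        = (1 - 2 * X * S - 2 * X ^ q) - (1 - 4 * X) ^ ((q + 1) / 2) := by ring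
    rwa [heq] at this
  -- degree bounds
  have hdegS : S.natDegree ≤ q - 1 := by
    rw [hS]
    refine Polynomial.natDegree_sum_le_of_forall_le _ _ ?_
    intro k hk
    refine le_trans (Polynomial.natDegree_C_mul_le _ _) ?_
    rw [Polynomial.natDegree_X_pow]
    rw [Finset.mem_range] at hk
    omega
  have hdegG : (1 - 2 * X * S - 2 * X ^ q : (ZMod p)[X]).natDegree ≤ q := by
    refine le_trans (Polynomial.natDegree_sub_le _ _) ?_
    rw [max_le_iff]
    constructor
    · refine le_trans (Polynomial.natDegree_sub_le _ _) ?_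
      rw [max_le_iff]
      constructor
      · simp
      · refine le_trans (Polynomial.natDegree_mul_le) ?_
        refine le_trans (add_le_add_left (Polynomial.natDegree_mul_le) _) ?_
        simp only [Polynomial.natDegree_X]
        have h2 : (2 : (ZMod p)[X]).natDegree = 0 := Polynomial.natDegree_ofNat 2
        omega
    · refine le_trans (Polynomial.natDegree_mul_le) ?_
      have h2 : (2 : (ZMod p)[X]).natDegree = 0 := Polynomial.natDegree_ofNat 2
      rw [Polynomial.natDegree_X_pow]
      omega
  have hdegH : ((1 - 4 * X : (ZMod p)[X]) ^ ((q + 1) / 2)).natDegree ≤ q := by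
    refine le_trans (Polynomial.natDegree_pow_le) ?_
    have h14 : (1 - 4 * X : (ZMod p)[X]).natDegree ≤ 1 := by
      refine le_trans (Polynomial.natDegree_sub_le _ _) ?_
      rw [max_le_iff]
      constructor
      · simp
      · refine le_trans (Polynomial.natDegree_mul_le) ?_
        have h4 : (4 : (ZMod p)[X]).natDegree = 0 := Polynomial.natDegree_ofNat 4
        simp [h4]
    calc ((q + 1) / 2) * (1 - 4 * X : (ZMod p)[X]).natDegree ≤ ((q + 1) / 2) * 1 :=
          Nat.mul_le_mul_left _ h14
      _ ≤ q := by omega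
  -- conclude equality
  have hzero : (1 - 2 * X * S - 2 * X ^ q : (ZMod p)[X])
      - (1 - 4 * X) ^ ((q + 1) / 2) = 0 := by
    by_contra hne
    have hle := Polynomial.natDegree_le_of_dvd hdvd3 hne
    rw [Polynomial.natDegree_X_pow] at hle
    have := le_trans (Polynomial.natDegree_sub_le _ _) (max_le hdegG hdegH)
    omega
  have hfin : (1 - 2 * X * S - 2 * X ^ q : (ZMod p)[X]) = (1 - 4 * X) ^ ((q + 1) / 2) :=
    sub_eq_zero.mp hzero
  linear_combination -hfin
end

section
/- Let p be a prime and let q = p^r be a power of p (r ≥ 1). Then ∑_{k=0}^{q-1} C(2k,k) ≡ (q/3) (mod p), where (q/3) denotes the Legendre symbol of q modulo 3; i.e., the image of ∑_{k=0}^{q-1} C(2k,k) in ℤ/pℤ equals the image of the integer (q/3) ∈ {0, 1, −1}. -/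
open Finset

section
variable {p : ℕ} [hp : Fact p.Prime]

lemma lucas_cast (n k : ℕ) :
    ((n.choose k : ℕ) : ZMod p) = ((n % p).choose (k % p) : ℕ) * ((n / p).choose (k / p) : ℕ) := by
  have h := Choose.choose_modEq_choose_mod_mul_choose_div (p := p) (n := n) (k := k)
  rw [← ZMod.intCast_eq_intCast_iff] at h
  exact_mod_cast h

lemma cb_zero {a : ℕ} (ha : a < p) (h2 : p ≤ 2 * a) : (((2 * a).choose a : ℕ) : ZMod p) = 0 := by
  have hmod : (2 * a) % p = 2 * a - p := by
    rw [Nat.mod_eq_sub_mod h2, Nat.mod_eq_of_lt (by omega)]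
  rw [lucas_cast, hmod, Nat.mod_eq_of_lt ha, Nat.choose_eq_zero_of_lt (by omega)]
  simp
end

section
variable {p : ℕ} [hp : Fact p.Prime]

lemma term_split {a n : ℕ} (ha : a < p) :
    (((2 * (p * n + a)).choose (p * n + a) : ℕ) : ZMod p) =
      ((2 * a).choose a : ℕ) * ((2 * n).choose n : ℕ) := by
  have hp0 : 0 < p := hp.out.pos
  have hk2 : 2 * (p * n + a) = 2 * a + p * (2 * n) := by ring
  have hkm : (p * n + a) % p = a := by
    rw [add_comm, Nat.add_mul_mod_self_left, Nat.mod_eq_of_lt ha]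
  have hkd : (p * n + a) / p = n := by
    rw [add_comm, Nat.add_mul_div_left _ _ hp0, Nat.div_eq_of_lt ha, zero_add]
  by_cases h2 : 2 * a < p
  · have hm : (2 * (p * n + a)) % p = 2 * a := by
      rw [hk2, Nat.add_mul_mod_self_left, Nat.mod_eq_of_lt h2]
    have hd : (2 * (p * n + a)) / p = 2 * n := by
      rw [hk2, Nat.add_mul_div_left _ _ hp0, Nat.div_eq_of_lt h2, zero_add]
    rw [lucas_cast, hm, hd, hkm, hkd]
  · push_neg at h2
    have hm : (2 * (p * n + a)) % p = 2 * a - p := by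
      rw [hk2, Nat.add_mul_mod_self_left, Nat.mod_eq_sub_mod h2, Nat.mod_eq_of_lt (by omega)]
    rw [lucas_cast, hm, hkm, Nat.choose_eq_zero_of_lt (by omega), cb_zero ha h2]
    simp

lemma sum_mul_step (n : ℕ) :
    ((∑ k ∈ Finset.range (p * n), (2 * k).choose k : ℕ) : ZMod p) =
      ((∑ a ∈ Finset.range p, (2 * a).choose a : ℕ)) *
        ((∑ j ∈ Finset.range n, (2 * j).choose j : ℕ)) := by
  induction n with
  | zero => simp
  | succ n ih =>
    rw [Nat.mul_succ, Finset.sum_range_add, Finset.sum_range_succ]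
    push_cast
    push_cast at ih
    rw [ih, mul_add]
    congr 1
    rw [Finset.sum_mul]
    refine Finset.sum_congr rfl fun a ha => ?_
    rw [term_split (Finset.mem_range.mp ha)]

lemma sum_pow (r : ℕ) :
    ((∑ k ∈ Finset.range (p ^ r), (2 * k).choose k : ℕ) : ZMod p) =
      ((∑ a ∈ Finset.range p, (2 * a).choose a : ℕ)) ^ r := by
  induction r with
  | zero => simp
  | succ r ih => rw [pow_succ, mul_comm (p^r) p, pow_succ', sum_mul_step, ih]
end

section
variable {p : ℕ} [hp : Fact p.Prime]

lemma cb_eq (hp2 : p ≠ 2) : ∀ k, k < p →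
    (((2 * k).choose k : ℕ) : ZMod p) = (-4) ^ k * ((p / 2).choose k : ℕ) := by
  have hodd : p % 2 = 1 := Nat.odd_iff.mp (hp.out.odd_of_ne_two hp2)
  intro k
  induction k with
  | zero => simp
  | succ k ih =>
    intro hk1
    have hk : k < p := by omega
    have ih := ih hk
    set m := p / 2 with hm
    have hmp : 2 * m + 1 = p := by omega
    have hne : ((k : ZMod p) + 1) ≠ 0 := by
      have h1 : ((k + 1 : ℕ) : ZMod p) ≠ 0 := by
        rw [Ne, ZMod.natCast_eq_zero_iff]
        intro hdvd
        exact absurd (Nat.le_of_dvd (by omega) hdvd) (by omega)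
      push_cast at h1; exact h1
    have h2m : (2 * (m : ZMod p)) = -1 := by
      have h0 : ((2 * m + 1 : ℕ) : ZMod p) = 0 := by rw [hmp]; exact ZMod.natCast_self p
      push_cast at h0; linear_combination h0
    apply mul_left_cancel₀ hne
    have hL : ((k : ZMod p) + 1) * (((2 * (k + 1)).choose (k + 1) : ℕ) : ZMod p) =
        2 * (2 * (k : ZMod p) + 1) * (((2 * k).choose k : ℕ) : ZMod p) := by
      have hnat := Nat.succ_mul_centralBinom_succ k
      rw [Nat.centralBinom_eq_two_mul_choose, Nat.centralBinom_eq_two_mul_choose] at hnat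
      have hc := congrArg (Nat.cast : ℕ → ZMod p) hnat
      push_cast at hc
      linear_combination hc
    rw [hL, ih]
    rcases lt_trichotomy k m with hkm | hkm | hkm
    · have hc := Nat.choose_succ_right_eq m k
      have hcast := congrArg (Nat.cast : ℕ → ZMod p) hc
      push_cast [Nat.cast_sub hkm.le] at hcast
      rw [pow_succ]
      linear_combination ((-4 : ZMod p)) ^ k * 4 * hcast +
        2 * ((-4 : ZMod p)) ^ k * ((m.choose k : ℕ) : ZMod p) * h2m
    · subst hkm
      rw [Nat.choose_succ_self, Nat.choose_self]
      push_cast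
      linear_combination 2 * ((-4 : ZMod p)) ^ m * h2m
    · rw [Nat.choose_eq_zero_of_lt hkm, Nat.choose_eq_zero_of_lt (by omega)]
      push_cast
      ring

lemma base_case (hp2 : p ≠ 2) :
    ((∑ a ∈ Finset.range p, (2 * a).choose a : ℕ) : ZMod p) = (-3 : ZMod p) ^ (p / 2) := by
  have hodd : p % 2 = 1 := Nat.odd_iff.mp (hp.out.odd_of_ne_two hp2)
  set m := p / 2 with hm
  have hmp : 2 * m + 1 = p := by omega
  push_cast
  rw [Finset.sum_congr rfl (fun k hk =>
    cb_eq hp2 k (Finset.mem_range.mp hk))]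
  rw [← Finset.sum_subset (Finset.range_subset_range.mpr (show m + 1 ≤ p by omega))]
  · have hap := add_pow (-4 : ZMod p) 1 m
    simp only [one_pow, mul_one] at hap
    rw [show ((-4 : ZMod p) + 1) = -3 by ring] at hap
    rw [← hap]
  · intro x hx hx2
    rw [Nat.choose_eq_zero_of_lt (by simp at hx2 ⊢; omega)]
    simp
end

section
variable {p : ℕ} [hp : Fact p.Prime]

lemma legendre_flip (hp2 : p ≠ 2) (hp3 : p ≠ 3) :
    ((legendreSym 3 (p : ℤ) : ℤ) : ZMod p) = (-3 : ZMod p) ^ (p / 2) := by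
  have h := legendreSym.quadratic_reciprocity' (p := 3) (q := p) (by norm_num) hp2
  have e3 : (3 : ℕ) / 2 = 1 := rfl
  rw [e3, one_mul] at h
  push_cast at h
  have h2 : legendreSym 3 (p : ℤ) = (-1) ^ (p / 2) * legendreSym p 3 := by
    rcases Nat.even_or_odd (p / 2) with he | he
    · rw [he.neg_one_pow] at h ⊢; rw [one_mul] at h ⊢; exact h.symm
    · rw [he.neg_one_pow] at h ⊢; rw [neg_one_mul] at h ⊢; linarith
  rw [h2]
  push_cast
  rw [legendreSym.eq_pow]
  rw [show ((3 : ℤ) : ZMod p) = -(-3 : ZMod p) by push_cast; ring]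
  rw [show (-1 : ZMod p) ^ (p / 2) * (-(-3 : ZMod p)) ^ (p / 2) = (-3 : ZMod p) ^ (p / 2) by
    rw [← mul_pow]; ring_nf]
end

lemma hS3 : ((∑ a ∈ Finset.range 3, (2 * a).choose a : ℕ) : ZMod 3) = 0 := by decide
lemma hS2 : ((∑ a ∈ Finset.range 2, (2 * a).choose a : ℕ) : ZMod 2) = 1 := by decide
lemma hz3 : ((3 : ZMod 3)) = 0 := rfl
lemma hne32 : ((2 : ℤ) : ZMod 3) ≠ 0 := by decide
lemma hneg12 : ((-1 : ℤ) : ZMod 2) = 1 := by decide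

theorem central_binomial_partial_sum_mod_p
    (p : ℕ) (hp : p.Prime) (r : ℕ) (hr : 1 ≤ r) (q : ℕ) (hq : q = p ^ r) :
    ((∑ k ∈ Finset.range q, (2 * k).choose k : ℕ) : ZMod p) =
      ((legendreSym 3 (q : ℤ) : ℤ) : ZMod p) := by
  haveI : Fact p.Prime := ⟨hp⟩
  subst hq
  rw [_root_.sum_pow]
  by_cases hp3 : p = 3
  · subst hp3
    rw [hS3, zero_pow (by omega)]
    have h0 : legendreSym 3 ((3 ^ r : ℕ) : ℤ) = 0 := by
      rw [legendreSym.eq_zero_iff]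
      push_cast
      rw [hz3, zero_pow (by omega)]
    rw [h0]; simp
  · have hpow : legendreSym 3 ((p ^ r : ℕ) : ℤ) = (legendreSym 3 ((p : ℕ) : ℤ)) ^ r := by
      push_cast
      exact map_pow (legendreSym.hom 3) _ _
    rw [hpow]
    by_cases hp2 : p = 2
    · subst hp2
      rw [hS2, one_pow]
      push_cast
      rcases legendreSym.eq_one_or_neg_one (p := 3) (a := (2 : ℤ)) hne32 with h | h <;> rw [h]
      · norm_num
      · rw [hneg12, one_pow]
    · rw [base_case hp2]
      push_cast
      rw [legendre_flip hp2 hp3]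
end

section
/- Let p be an odd prime and let q = p^r be a power of p (r ≥ 1). Then 2·∑_{k=0}^{q-1} C_k ≡ 3·(q/3) − 1 (mod p), where (q/3) denotes the Legendre symbol of q modulo 3; i.e., in ℤ/pℤ, twice the image of ∑_{k=0}^{q-1} C_k equals the image of the integer 3·(q/3) − 1. (Equivalently, ∑_{k=0}^{q-1} C_k ≡ (3·(q/3) − 1)/2 (mod p).) -/
open Finset

lemma aux_telescope (n : ℕ) :
    2 * ∑ k ∈ Finset.range n, catalan k + Nat.centralBinom n
      = 3 * ∑ k ∈ Finset.range n, Nat.centralBinom k + 1 := by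
  induction n with
  | zero => simp [Nat.centralBinom]
  | succ n ih =>
    have hcb : Nat.centralBinom (n + 1) = (4 * n + 2) * catalan n := by
      have h1 := Nat.succ_mul_centralBinom_succ n
      have h2 := succ_mul_catalan_eq_centralBinom n
      have : (n + 1) * Nat.centralBinom (n + 1) = (n + 1) * ((4 * n + 2) * catalan n) := by
        rw [h1, ← h2]; ring
      exact Nat.eq_of_mul_eq_mul_left (Nat.succ_pos n) this
    have hcb' : Nat.centralBinom n = (n + 1) * catalan n :=
      (succ_mul_catalan_eq_centralBinom n).symm
    rw [Finset.sum_range_succ, Finset.sum_range_succ, hcb]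
    zify at ih hcb' ⊢
    linear_combination ih - 4 * hcb'

lemma aux_lucas {p : ℕ} [Fact p.Prime] (n k : ℕ) :
    ((Nat.choose n k : ℕ) : ZMod p)
      = ((Nat.choose (n % p) (k % p) : ℕ) : ZMod p) * ((Nat.choose (n / p) (k / p) : ℕ) : ZMod p) := by
  have h := @Choose.choose_modEq_choose_mod_mul_choose_div n k p _
  have h2 := (ZMod.intCast_eq_intCast_iff _ _ _).mpr h
  push_cast at h2 ⊢
  exact h2

lemma aux_digit {p : ℕ} [Fact p.Prime] (hodd : Odd p) :
    ∀ i, i ≤ p / 2 →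
      (Nat.centralBinom i : ZMod p) = (-4) ^ i * ((Nat.choose (p / 2) i : ℕ) : ZMod p) := by
  have hp2 : 2 ≤ p := (Fact.out : p.Prime).two_le
  have hpodd : p % 2 = 1 := Nat.odd_iff.mp hodd
  have hm : 2 * (p / 2) + 1 = p := by omega
  intro i
  induction i with
  | zero => simp
  | succ i ih =>
    intro hi1
    have hi : i ≤ p / 2 := by omega
    have IH := ih hi
    have h1 : ((i : ZMod p) + 1) * (Nat.centralBinom (i + 1) : ZMod p)
        = 2 * (2 * (i : ZMod p) + 1) * (Nat.centralBinom i : ZMod p) := by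
      have h := congrArg (fun n : ℕ => (n : ZMod p)) (Nat.succ_mul_centralBinom_succ i)
      push_cast at h
      linear_combination h
    have h2 : ((Nat.choose (p / 2) (i + 1) : ℕ) : ZMod p) * ((i : ZMod p) + 1)
        = ((Nat.choose (p / 2) i : ℕ) : ZMod p) * (((p / 2 : ℕ) : ZMod p) - (i : ZMod p)) := by
      have h := congrArg (fun n : ℕ => (n : ZMod p)) (Nat.choose_succ_right_eq (p / 2) i)
      push_cast [Nat.cast_sub hi] at h
      linear_combination h
    have hne : ((i : ZMod p) + 1) ≠ 0 := by
      have : ((i + 1 : ℕ) : ZMod p) ≠ 0 := by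
        rw [Ne, ZMod.natCast_eq_zero_iff]
        intro hdvd
        have hle := Nat.le_of_dvd (by omega) hdvd
        have : p / 2 < p := by omega
        omega
      push_cast at this
      exact this
    have hp0 : 2 * (((p / 2 : ℕ)) : ZMod p) + 1 = 0 := by
      have h := congrArg (fun n : ℕ => (n : ZMod p)) hm
      push_cast at h
      rw [h, ZMod.natCast_self]
    apply mul_left_cancel₀ hne
    rw [h1, IH]
    linear_combination (4 * (-4 : ZMod p) ^ i) * h2
      + (2 * (-4 : ZMod p) ^ i * ((Nat.choose (p / 2) i : ℕ) : ZMod p)) * hp0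

lemma aux_main {p : ℕ} [Fact p.Prime] (hodd : Odd p) :
    ∀ r : ℕ, ∀ k, k < p ^ r →
      (Nat.centralBinom k : ZMod p)
        = (-4) ^ k * ((Nat.choose ((p ^ r - 1) / 2) k : ℕ) : ZMod p) := by
  have hp2 : 2 ≤ p := (Fact.out : p.Prime).two_le
  have hpodd : p % 2 = 1 := Nat.odd_iff.mp hodd
  have hm : 2 * (p / 2) + 1 = p := by omega
  intro r
  induction r with
  | zero =>
    intro k hk
    have : k = 0 := by simpa using hk
    subst this
    simp [Nat.centralBinom]
  | succ r ih =>
    intro k hk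
    have hq1 : 1 ≤ p ^ r := Nat.one_le_pow _ _ (by omega)
    have hqodd : p ^ r % 2 = 1 := Nat.odd_iff.mp (hodd.pow)
    have hM : 2 * ((p ^ r - 1) / 2) + 1 = p ^ r := by omega
    have hps : p ^ (r + 1) = p * p ^ r := by ring
    have hM1 : (p ^ (r + 1) - 1) / 2 = p / 2 + p * ((p ^ r - 1) / 2) := by
      have h2 : 2 * (p / 2 + p * ((p ^ r - 1) / 2)) + 1 = p ^ (r + 1) := by
        have : 2 * (p / 2 + p * ((p ^ r - 1) / 2)) + 1
            = 2 * (p / 2) + 1 + p * (2 * ((p ^ r - 1) / 2)) := by ring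
        rw [this, hm]
        calc p + p * (2 * ((p ^ r - 1) / 2)) = p * (2 * ((p ^ r - 1) / 2) + 1) := by ring
        _ = p * p ^ r := by rw [hM]
        _ = p ^ (r + 1) := hps.symm
      omega
    set m := p / 2 with hmdef
    set M := (p ^ r - 1) / 2 with hMdef
    set i := k % p with hidef
    set j := k / p with hjdef
    have hk0 : k = p * j + i := (Nat.div_add_mod k p).symm.trans (by ring)
    have hilt : i < p := Nat.mod_lt _ (by omega)
    have hjlt : j < p ^ r := by
      rw [hjdef, Nat.div_lt_iff_lt_mul (by omega : 0 < p)]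
      calc k < p ^ (r + 1) := hk
      _ = p ^ r * p := by ring
    -- Lucas for the RHS binomial
    have hRHS : ((Nat.choose ((p ^ (r + 1) - 1) / 2) k : ℕ) : ZMod p)
        = ((Nat.choose m i : ℕ) : ZMod p) * ((Nat.choose M j : ℕ) : ZMod p) := by
      have h := aux_lucas (p := p) ((p ^ (r + 1) - 1) / 2) k
      rw [hM1] at h
      have e1 : (m + p * M) % p = m := by
        rw [Nat.add_mul_mod_self_left]
        exact Nat.mod_eq_of_lt (by omega)
      have e2 : (m + p * M) / p = M := by
        rw [Nat.add_mul_div_left _ _ (by omega : 0 < p), Nat.div_eq_of_lt (by omega)]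
        omega
      rw [e1, e2, ← hidef, ← hjdef] at h
      rw [hM1]
      exact h
    by_cases hcase : i ≤ m
    · have h2k : 2 * k = 2 * i + p * (2 * j) := by
        have : p * (2 * j) = 2 * (p * j) := by ring
        omega
      have e1 : (2 * k) % p = 2 * i := by
        rw [h2k, Nat.add_mul_mod_self_left]
        exact Nat.mod_eq_of_lt (by omega)
      have e2 : (2 * k) / p = 2 * j := by
        rw [h2k, Nat.add_mul_div_left _ _ (by omega : 0 < p), Nat.div_eq_of_lt (by omega)]
        omega
      have hL : (Nat.centralBinom k : ZMod p)
          = (Nat.centralBinom i : ZMod p) * (Nat.centralBinom j : ZMod p) := by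
        have h := aux_lucas (p := p) (2 * k) k
        rw [e1, e2, ← hidef, ← hjdef] at h
        simpa [Nat.centralBinom] using h
      have hpow : ((-4 : ZMod p)) ^ k = (-4) ^ i * (-4) ^ j := by
        rw [hk0, pow_add, mul_comm p j, pow_mul, ZMod.pow_card, mul_comm]
      rw [hL, aux_digit hodd i hcase, ih j hjlt, hRHS, hpow]
      ring
    · have h2ip : p ≤ 2 * i := by omega
      have h2k : 2 * k = (2 * i - p) + p * (2 * j + 1) := by
        have : p * (2 * j + 1) = 2 * (p * j) + p := by ring
        omega
      have e1 : (2 * k) % p = 2 * i - p := by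
        rw [h2k, Nat.add_mul_mod_self_left]
        exact Nat.mod_eq_of_lt (by omega)
      have e2 : (2 * k) / p = 2 * j + 1 := by
        rw [h2k, Nat.add_mul_div_left _ _ (by omega : 0 < p), Nat.div_eq_of_lt (by omega)]
        omega
      have hL : (Nat.centralBinom k : ZMod p) = 0 := by
        have h := aux_lucas (p := p) (2 * k) k
        rw [e1, e2, ← hidef] at h
        rw [Nat.choose_eq_zero_of_lt (by omega : 2 * i - p < i)] at h
        simpa [Nat.centralBinom] using h
      rw [hL, hRHS, Nat.choose_eq_zero_of_lt (by omega : m < i)]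
      simp

lemma aux_cb_two {p : ℕ} [Fact p.Prime] : ∀ r : ℕ, (Nat.centralBinom (p ^ r) : ZMod p) = 2 := by
  have hp2 : 2 ≤ p := (Fact.out : p.Prime).two_le
  intro r
  induction r with
  | zero => simp [Nat.centralBinom]
  | succ r ih =>
    have h := aux_lucas (p := p) (2 * p ^ (r + 1)) (p ^ (r + 1))
    have ha : 2 * p ^ (r + 1) = p * (2 * p ^ r) := by ring
    have hb : p ^ (r + 1) = p * p ^ r := by ring
    have e1 : (2 * p ^ (r + 1)) % p = 0 := by rw [ha, Nat.mul_mod_right]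
    have e2 : (2 * p ^ (r + 1)) / p = 2 * p ^ r := by
      rw [ha, Nat.mul_div_cancel_left _ (by omega : 0 < p)]
    have e3 : p ^ (r + 1) % p = 0 := by rw [hb, Nat.mul_mod_right]
    have e4 : p ^ (r + 1) / p = p ^ r := by
      rw [hb, Nat.mul_div_cancel_left _ (by omega : 0 < p)]
    rw [e1, e2, e3, e4] at h
    simp only [Nat.centralBinom] at ih ⊢
    simpa [ih] using h

lemma aux_halfpow {p : ℕ} (hp2 : 2 ≤ p) (hpodd : p % 2 = 1) (r : ℕ) :
    (p ^ (r + 1) - 1) / 2 = p / 2 + p * ((p ^ r - 1) / 2) := by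
  have hq1 : 1 ≤ p ^ r := Nat.one_le_pow _ _ (by omega)
  have hqodd : p ^ r % 2 = 1 := Nat.odd_iff.mp ((Nat.odd_iff.mpr hpodd).pow)
  have hM : 2 * ((p ^ r - 1) / 2) + 1 = p ^ r := by omega
  have hm : 2 * (p / 2) + 1 = p := by omega
  have h2 : 2 * (p / 2 + p * ((p ^ r - 1) / 2)) + 1 = p ^ (r + 1) := by
    have e : 2 * (p / 2 + p * ((p ^ r - 1) / 2)) + 1
        = 2 * (p / 2) + 1 + p * (2 * ((p ^ r - 1) / 2)) := by ring
    rw [e, hm]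
    calc p + p * (2 * ((p ^ r - 1) / 2)) = p * (2 * ((p ^ r - 1) / 2) + 1) := by ring
    _ = p * p ^ r := by rw [hM]
    _ = p ^ (r + 1) := by ring
  omega

lemma aux_e1 : ((-3 : ℤ) : ZMod 3) = 0 := by decide
lemma aux_e2 : (((3 : ℕ) : ℤ) : ZMod 3) = 0 := by decide

lemma aux_leg1 {p : ℕ} [Fact p.Prime] (hp2 : p ≠ 2) :
    legendreSym p (-3) = legendreSym 3 (p : ℤ) := by
  by_cases h3 : p = 3
  · subst h3
    have l1 : legendreSym 3 (-3 : ℤ) = 0 := (legendreSym.eq_zero_iff 3 (-3)).mpr aux_e1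
    have l2 : legendreSym 3 ((3 : ℕ) : ℤ) = 0 :=
      (legendreSym.eq_zero_iff 3 ((3 : ℕ) : ℤ)).mpr aux_e2
    rw [l1, l2]
  · have hodd : p % 2 = 1 := (Nat.Prime.eq_two_or_odd (Fact.out)).resolve_left hp2
    have hmul : legendreSym p (-3) = legendreSym p (-1) * legendreSym p 3 := by
      rw [show (-3 : ℤ) = -1 * 3 by norm_num, legendreSym.mul]
    have hrec := legendreSym.quadratic_reciprocity' (p := 3) (q := p) (by norm_num) hp2
    push_cast at hrec
    have hneg1 : legendreSym p (-1) = (-1) ^ (p / 2) := by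
      rw [legendreSym.at_neg_one hp2, ZMod.χ₄_eq_neg_one_pow hodd]
    have h32 : (3 : ℕ) / 2 * (p / 2) = p / 2 := by omega
    rw [hmul, hneg1, hrec, h32, ← mul_assoc, ← pow_add]
    have hev : Even (p / 2 + p / 2) := ⟨p / 2, rfl⟩
    rw [hev.neg_one_pow, one_mul]

lemma aux_leg2 (r : ℕ) (a : ℤ) : legendreSym 3 (a ^ r) = legendreSym 3 a ^ r := by
  induction r with
  | zero => simp [legendreSym.at_one]
  | succ r ih => rw [pow_succ, legendreSym.mul, ih, pow_succ]

lemma aux_pow_leg {p : ℕ} [Fact p.Prime] (hodd : Odd p) (r : ℕ) :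
    ((-3 : ZMod p)) ^ ((p ^ r - 1) / 2) = ((legendreSym p (-3) ^ r : ℤ) : ZMod p) := by
  have hp2 : 2 ≤ p := (Fact.out : p.Prime).two_le
  have hpodd : p % 2 = 1 := Nat.odd_iff.mp hodd
  induction r with
  | zero => simp
  | succ r ih =>
    rw [aux_halfpow hp2 hpodd r, pow_add, mul_comm p _, pow_mul, ZMod.pow_card, ih]
    have he := legendreSym.eq_pow p (-3)
    push_cast at he ⊢
    rw [pow_succ]
    have hm : p / 2 = p / 2 := rfl
    rw [← he]
    ring

lemma aux_sum {p : ℕ} [Fact p.Prime] (hodd : Odd p) (r : ℕ) :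
    ((∑ k ∈ Finset.range (p ^ r), Nat.centralBinom k : ℕ) : ZMod p)
      = (-3) ^ ((p ^ r - 1) / 2) := by
  have hp2 : 2 ≤ p := (Fact.out : p.Prime).two_le
  have hq1 : 1 ≤ p ^ r := Nat.one_le_pow _ _ (by omega)
  have hqodd : p ^ r % 2 = 1 := Nat.odd_iff.mp (hodd.pow)
  have hM : 2 * ((p ^ r - 1) / 2) + 1 = p ^ r := by omega
  push_cast
  rw [Finset.sum_congr rfl (fun k hk => aux_main hodd r k (Finset.mem_range.mp hk))]
  have hsub : Finset.range ((p ^ r - 1) / 2 + 1) ⊆ Finset.range (p ^ r) :=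
    Finset.range_subset_range.mpr (by omega)
  rw [← Finset.sum_subset hsub (fun x _ hx => by
    rw [Nat.choose_eq_zero_of_lt (by simp at hx ⊢; omega), Nat.cast_zero, mul_zero])]
  have hap := add_pow (-4 : ZMod p) 1 ((p ^ r - 1) / 2)
  norm_num at hap
  exact hap.symm

theorem catalan_partial_sum_mod_p
    (p : ℕ) (hp : p.Prime) (hodd : Odd p) (r : ℕ) (hr : 1 ≤ r) (q : ℕ) (hq : q = p ^ r) :
    ((2 * ∑ k ∈ Finset.range q, catalan k : ℕ) : ZMod p) =
      ((3 * legendreSym 3 (q : ℤ) - 1 : ℤ) : ZMod p) := by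
  haveI : Fact p.Prime := ⟨hp⟩
  subst hq
  have hp2 : p ≠ 2 := by
    rintro rfl
    simp [Nat.odd_iff] at hodd
  have ht := congrArg (fun n : ℕ => (n : ZMod p)) (aux_telescope (p ^ r))
  push_cast at ht
  have hcb := aux_cb_two (p := p) r
  have hsum := aux_sum hodd r
  push_cast at hcb hsum
  have hchain : ((-3 : ZMod p)) ^ ((p ^ r - 1) / 2)
      = ((legendreSym 3 ((p ^ r : ℕ) : ℤ) : ℤ) : ZMod p) := by
    rw [aux_pow_leg hodd r, aux_leg1 hp2]
    have : ((p ^ r : ℕ) : ℤ) = ((p : ℕ) : ℤ) ^ r := by push_cast; ring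
    rw [this, aux_leg2 r]
  push_cast
  rw [show ((2 : ZMod p)) * ∑ k ∈ Finset.range (p ^ r), (catalan k : ZMod p)
      = 3 * (∑ k ∈ Finset.range (p ^ r), (Nat.centralBinom k : ZMod p)) + 1
        - (Nat.centralBinom (p ^ r) : ZMod p) by linear_combination ht]
  rw [hsum, hchain, hcb]
  push_cast
  ring
end

section
/- Let p be an odd prime and let q = p^r be a power of p (r ≥ 1), so that q ≥ 3. Then in the polynomial ring (ℤ/pℤ)[X] one has ∑_{k=0}^{q-1} k·C(2k,k)·X^k = 2X·(1 − 4X)^{(q-3)/2}, where each integer k·C(2k,k) is reduced modulo p. -/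
open Finset Polynomial

-- Lucas single-digit, in ZMod p
lemma lucas_zmod (p : ℕ) [Fact p.Prime] (n k : ℕ) :
    ((n.choose k : ZMod p)) = ((n % p).choose (k % p) : ℕ) * (((n / p).choose (k / p) : ℕ)) := by
  have := (Choose.choose_modEq_choose_mod_mul_choose_div_nat (n := n) (k := k) (p := p))
  exact_mod_cast (ZMod.natCast_eq_natCast_iff _ _ _).mpr this

lemma cb_split (p : ℕ) [Fact p.Prime] (a b : ℕ) (ha : a < p) :
    (((2 * (a + p * b)).choose (a + p * b) : ZMod p)) =
      ((2 * a).choose a : ZMod p) * ((2 * b).choose b : ZMod p) := by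
  have hp : 0 < p := Fact.out (p := p.Prime) |>.pos
  have hk1 : (a + p * b) % p = a := by
    rw [Nat.add_mul_mod_self_left, Nat.mod_eq_of_lt ha]
  have hk2 : (a + p * b) / p = b := by
    rw [Nat.add_mul_div_left _ _ hp, Nat.div_eq_of_lt ha, zero_add]
  have h2k : 2 * (a + p * b) = 2 * a + p * (2 * b) := by ring
  rw [lucas_zmod p (2 * (a + p * b)) (a + p * b), h2k, hk1, hk2,
    Nat.add_mul_mod_self_left, Nat.add_mul_div_left _ _ hp]
  rw [lucas_zmod p (2 * a) a, Nat.mod_eq_of_lt ha, Nat.div_eq_of_lt ha, Nat.choose_zero_right]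
  rcases lt_or_ge (2 * a) p with h | h
  · rw [Nat.mod_eq_of_lt h, Nat.div_eq_of_lt h, zero_add]
    push_cast
    ring
  · have hmod : 2 * a % p = 2 * a - p := by
      rw [Nat.mod_eq_sub_mod h, Nat.mod_eq_of_lt (by omega)]
    have hz : (2 * a - p).choose a = 0 := Nat.choose_eq_zero_of_lt (by omega)
    have hdiv : 2 * a / p = 1 :=
      Nat.div_eq_of_lt_le (by omega) (by omega)
    rw [hmod, hz]
    push_cast
    ring

lemma cb_coeff (p : ℕ) [Fact p.Prime] (hodd : Odd p) (k : ℕ) (hk : k ≤ (p - 1) / 2) :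
    (((2 * k).choose k : ZMod p)) = (-4) ^ k * (((p - 1) / 2).choose k : ZMod p) := by
  have hp : p.Prime := Fact.out
  have hp3 : 3 ≤ p := by
    rcases hodd with ⟨t, ht⟩
    have := hp.two_le
    omega
  set m := (p - 1) / 2 with hm
  have h2m : 2 * m + 1 = p := by
    rcases hodd with ⟨t, ht⟩
    omega
  induction k with
  | zero => simp
  | succ k ih =>
    have hk' : k ≤ m := by omega
    have ihk := ih hk'
    have hku : ((k : ZMod p) + 1) ≠ 0 := by
      have : ((k + 1 : ℕ) : ZMod p) ≠ 0 := by
        rw [Ne, ZMod.natCast_eq_zero_iff]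
        intro hdvd
        have := Nat.le_of_dvd (by omega) hdvd
        omega
      push_cast at this
      exact this
    -- nat identities
    have h1 : ((k : ℕ) + 1) * (2 * (k + 1)).choose (k + 1) = 2 * (2 * k + 1) * ((2 * k).choose k) := by
      have := Nat.succ_mul_centralBinom_succ k
      simpa [Nat.centralBinom] using this
    have h2 : m.choose (k + 1) * (k + 1) = m.choose k * (m - k) := Nat.choose_succ_right_eq m k
    -- cast to ZMod p
    have hc1 : ((k : ZMod p) + 1) * ((2 * (k + 1)).choose (k + 1) : ZMod p)
        = 2 * (2 * (k : ZMod p) + 1) * ((2 * k).choose k : ZMod p) := by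
      exact_mod_cast congrArg (Nat.cast : ℕ → ZMod p) h1
    have hmk : ((m - k : ℕ) : ZMod p) = (m : ZMod p) - k := by
      rw [Nat.cast_sub hk']
    have hc2 : ((m.choose (k + 1) : ZMod p)) * ((k : ZMod p) + 1)
        = (m.choose k : ZMod p) * ((m : ZMod p) - (k : ZMod p)) := by
      rw [← hmk]
      exact_mod_cast congrArg (Nat.cast : ℕ → ZMod p) h2
    -- key scalar identity: -4 * (m - k) = 2 * (2k+1)
    have hmz : (2 : ZMod p) * (m : ZMod p) = -1 := by
      have : ((2 * m + 1 : ℕ) : ZMod p) = ((p : ℕ) : ZMod p) := by rw [h2m]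
      push_cast at this
      rw [ZMod.natCast_self] at this
      linear_combination this
    have key : (-4 : ZMod p) * ((m : ZMod p) - k) = 2 * (2 * (k : ZMod p) + 1) := by
      linear_combination (-2 : ZMod p) * hmz
    -- combine
    apply mul_left_cancel₀ hku
    rw [hc1, ihk]
    calc 2 * (2 * (k : ZMod p) + 1) * ((-4) ^ k * (m.choose k : ZMod p))
        = (-4) ^ (k + 1) * ((m.choose k : ZMod p) * ((m : ZMod p) - k)) := by
          rw [← key]; ring
      _ = (-4) ^ (k + 1) * ((m.choose (k + 1) : ZMod p) * ((k : ZMod p) + 1)) := by rw [hc2]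
      _ = ((k : ZMod p) + 1) * ((-4) ^ (k + 1) * (m.choose (k + 1) : ZMod p)) := by ring

lemma cb_vanish (p : ℕ) [Fact p.Prime] (k : ℕ) (hk1 : (p - 1) / 2 < k) (hk2 : k < p) :
    (((2 * k).choose k : ZMod p)) = 0 := by
  have hp : p.Prime := Fact.out
  have hp2 := hp.two_le
  have hle : p ≤ 2 * k := by omega
  have hlt : 2 * k < 2 * p := by omega
  rw [lucas_zmod p (2 * k) k, Nat.mod_eq_of_lt hk2, Nat.mod_eq_sub_mod hle,
    Nat.mod_eq_of_lt (by omega), Nat.choose_eq_zero_of_lt (by omega)]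
  simp

lemma base_poly (p : ℕ) [Fact p.Prime] (hodd : Odd p) :
    ∑ k ∈ Finset.range p, Polynomial.C (((2 * k).choose k : ZMod p)) * Polynomial.X ^ k
      = (1 - 4 * Polynomial.X : Polynomial (ZMod p)) ^ ((p - 1) / 2) := by
  have hp : p.Prime := Fact.out
  have hp3 : 3 ≤ p := by
    rcases hodd with ⟨t, ht⟩; have := hp.two_le; omega
  set m := (p - 1) / 2 with hm
  have h2m : 2 * m + 1 = p := by rcases hodd with ⟨t, ht⟩; omega
  have hsplit : Finset.range p = Finset.range (m + 1) ∪ Finset.Ico (m + 1) p := by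
    ext x
    simp only [Finset.mem_range, Finset.mem_union, Finset.mem_Ico]
    omega
  rw [hsplit, Finset.sum_union (by
    rw [Finset.range_eq_Ico]
    exact Finset.Ico_disjoint_Ico_consecutive 0 (m + 1) p)]
  have hz : ∑ k ∈ Finset.Ico (m + 1) p,
      Polynomial.C (((2 * k).choose k : ZMod p)) * Polynomial.X ^ k = 0 := by
    apply Finset.sum_eq_zero
    intro k hk
    rw [Finset.mem_Ico] at hk
    rw [cb_vanish p k (by omega) hk.2]
    simp
  rw [hz, add_zero]
  have hrhs : (1 - 4 * Polynomial.X : Polynomial (ZMod p)) ^ m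
      = ∑ k ∈ Finset.range (m + 1),
          (-(4 * Polynomial.X)) ^ k * 1 ^ (m - k) * (m.choose k : Polynomial (ZMod p)) := by
    rw [← add_pow]
    ring_nf
  rw [hrhs]
  apply Finset.sum_congr rfl
  intro k hk
  rw [Finset.mem_range] at hk
  rw [cb_coeff p hodd k (by omega)]
  simp only [map_mul, map_pow, map_neg, one_pow, mul_one, Polynomial.C_eq_natCast, map_ofNat]
  ring

lemma sum_range_mul_comm {M : Type*} [AddCommMonoid M] (f : ℕ → M) (p q : ℕ) (hp : 0 < p) :
    ∑ k ∈ Finset.range (p * q), f k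
      = ∑ x ∈ Finset.range p ×ˢ Finset.range q, f (x.1 + p * x.2) := by
  apply Finset.sum_nbij' (i := fun k => ((k % p, k / p) : ℕ × ℕ)) (j := fun x => x.1 + p * x.2)
  · intro a ha
    rw [Finset.mem_range] at ha
    simp only [Finset.mem_product, Finset.mem_range]
    exact ⟨Nat.mod_lt _ hp, Nat.div_lt_iff_lt_mul hp |>.mpr (by rw [mul_comm q p]; exact ha)⟩
  · intro a ha
    simp only [Finset.mem_product, Finset.mem_range] at ha
    rw [Finset.mem_range]
    have h2 : a.2 + 1 ≤ q := ha.2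
    have e : p * (a.2 + 1) = p * a.2 + p := by ring
    calc a.1 + p * a.2 < p * (a.2 + 1) := by omega
      _ ≤ p * q := Nat.mul_le_mul_left p h2
  · intro a _; simp [Nat.mod_add_div]
  · intro a ha
    simp only [Finset.mem_product, Finset.mem_range] at ha
    ext
    · simp [Nat.add_mul_mod_self_left, Nat.mod_eq_of_lt ha.1]
    · simp [Nat.add_mul_div_left _ _ hp, Nat.div_eq_of_lt ha.1]
  · intro a _
    simp [Nat.mod_add_div]

lemma main_sum (p : ℕ) [Fact p.Prime] (hodd : Odd p) (r : ℕ) :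
    ∑ k ∈ Finset.range (p ^ r), Polynomial.C (((2 * k).choose k : ZMod p)) * Polynomial.X ^ k
      = (1 - 4 * Polynomial.X : Polynomial (ZMod p)) ^ ((p ^ r - 1) / 2) := by
  have hp : p.Prime := Fact.out
  have hppos : 0 < p := hp.pos
  have hp3 : 3 ≤ p := by rcases hodd with ⟨t, ht⟩; have := hp.two_le; omega
  induction r with
  | zero => simp
  | succ r ih =>
    have hQ : p ^ (r + 1) = p * p ^ r := by ring
    rw [hQ, sum_range_mul_comm _ p (p ^ r) hppos, Finset.sum_product]
    have hterm : ∀ a ∈ Finset.range p, ∀ b ∈ Finset.range (p ^ r),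
        Polynomial.C (((2 * (a + p * b)).choose (a + p * b) : ZMod p)) * Polynomial.X ^ (a + p * b)
        = (Polynomial.C (((2 * a).choose a : ZMod p)) * Polynomial.X ^ a) *
          (Polynomial.C (((2 * b).choose b : ZMod p)) * Polynomial.X ^ b) ^ p := by
      intro a ha b _
      rw [Finset.mem_range] at ha
      rw [cb_split p a b ha, mul_pow, ← Polynomial.C_pow, ZMod.pow_card, ← pow_mul,
        map_mul, pow_add, mul_comm b p]
      ring
    calc ∑ a ∈ Finset.range p, ∑ b ∈ Finset.range (p ^ r),
          Polynomial.C (((2 * (a + p * b)).choose (a + p * b) : ZMod p)) *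
            Polynomial.X ^ (a + p * b)
        = ∑ a ∈ Finset.range p, ∑ b ∈ Finset.range (p ^ r),
          (Polynomial.C (((2 * a).choose a : ZMod p)) * Polynomial.X ^ a) *
          (Polynomial.C (((2 * b).choose b : ZMod p)) * Polynomial.X ^ b) ^ p := by
          exact Finset.sum_congr rfl fun a ha => Finset.sum_congr rfl fun b hb => hterm a ha b hb
      _ = (∑ a ∈ Finset.range p,
            Polynomial.C (((2 * a).choose a : ZMod p)) * Polynomial.X ^ a) *
          (∑ b ∈ Finset.range (p ^ r),
            Polynomial.C (((2 * b).choose b : ZMod p)) * Polynomial.X ^ b) ^ p := by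
          rw [sum_pow_char, ← Finset.sum_mul_sum]
      _ = (1 - 4 * Polynomial.X : Polynomial (ZMod p)) ^ ((p - 1) / 2 + ((p ^ r - 1) / 2) * p) := by
          rw [base_poly p hodd, ih, ← pow_mul, ← pow_add]
      _ = (1 - 4 * Polynomial.X : Polynomial (ZMod p)) ^ ((p * p ^ r - 1) / 2) := by
          congr 1
          obtain ⟨e, he⟩ := (hodd.pow : Odd (p ^ r))
          obtain ⟨E, hE⟩ := (hodd.mul hodd.pow : Odd (p * p ^ r))
          have h2 : p * p ^ r = 2 * (e * p) + p := by
            rw [he]; ring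
          have h3 : (p ^ r - 1) / 2 = e := by omega
          rw [h3]
          obtain ⟨t, ht⟩ := hodd
          omega

theorem weighted_central_binomial_polynomial_mod_p
    (p : ℕ) (hp : p.Prime) (hodd : Odd p) (r : ℕ) (hr : 1 ≤ r) (q : ℕ) (hq : q = p ^ r) :
    ∑ k ∈ Finset.range q, Polynomial.C ((k * (2 * k).choose k : ZMod p)) * Polynomial.X ^ k =
      2 * Polynomial.X * (1 - 4 * Polynomial.X : Polynomial (ZMod p)) ^ ((q - 3) / 2) := by
  have hfact : Fact p.Prime := ⟨hp⟩
  have hp3 : 3 ≤ p := by rcases hodd with ⟨t, ht⟩; have := hp.two_le; omega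
  have hq3 : 3 ≤ q := by
    rw [hq]
    calc 3 ≤ p := hp3
      _ ≤ p ^ r := Nat.le_self_pow (by omega) p
  have hqodd : Odd q := by rw [hq]; exact hodd.pow
  have hmain := main_sum p hodd r
  rw [← hq] at hmain
  set E := (q - 1) / 2 with hE
  have hE1 : 2 * E + 1 = q := by obtain ⟨t, ht⟩ := hqodd; omega
  have hE3 : E - 1 = (q - 3) / 2 := by obtain ⟨t, ht⟩ := hqodd; omega
  have hcastq : ((q : ℕ) : ZMod p) = 0 := by
    rw [hq]
    push_cast
    rw [ZMod.natCast_self]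
    exact zero_pow (by omega)
  have hEc : (-4 : ZMod p) * ((E : ℕ) : ZMod p) = 2 := by
    have h2E : ((2 * E + 1 : ℕ) : ZMod p) = ((q : ℕ) : ZMod p) := by rw [hE1]
    push_cast at h2E
    rw [hcastq] at h2E
    linear_combination (-2 : ZMod p) * h2E
  have hD := congrArg (fun f => Polynomial.X * Polynomial.derivative f) hmain
  simp only [Polynomial.derivative_sum, Finset.mul_sum, Polynomial.derivative_pow,
    Polynomial.derivative_C_mul_X_pow] at hD
  have hd14 : Polynomial.derivative (1 - 4 * Polynomial.X : Polynomial (ZMod p))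
      = -4 := by
    simp
  rw [hd14] at hD
  have hC2 : Polynomial.C ((E : ZMod p)) * (-4 : Polynomial (ZMod p)) = 2 := by
    have h4 : (-4 : Polynomial (ZMod p)) = Polynomial.C (-4) := by
      rw [map_neg]
      exact congrArg Neg.neg (map_ofNat Polynomial.C 4).symm
    have hmulE : ((E : ZMod p)) * (-4) = 2 := by linear_combination hEc
    rw [h4, ← map_mul, hmulE, map_ofNat]
  have hrhs : Polynomial.X * (Polynomial.C ((E : ZMod p)) *
        (1 - 4 * Polynomial.X : Polynomial (ZMod p)) ^ (E - 1) * (-4))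
      = 2 * Polynomial.X * (1 - 4 * Polynomial.X : Polynomial (ZMod p)) ^ ((q - 3) / 2) := by
    calc Polynomial.X * (Polynomial.C ((E : ZMod p)) *
          (1 - 4 * Polynomial.X : Polynomial (ZMod p)) ^ (E - 1) * (-4))
        = (Polynomial.C ((E : ZMod p)) * (-4)) *
            (Polynomial.X * (1 - 4 * Polynomial.X : Polynomial (ZMod p)) ^ (E - 1)) := by ring
      _ = 2 * (Polynomial.X * (1 - 4 * Polynomial.X : Polynomial (ZMod p)) ^ (E - 1)) := by
          rw [hC2]
      _ = 2 * Polynomial.X * (1 - 4 * Polynomial.X : Polynomial (ZMod p)) ^ ((q - 3) / 2) := by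
          rw [← hE3]; ring
  rw [← hrhs, ← hD]
  apply Finset.sum_congr rfl
  intro k _
  rcases k with _ | i
  · simp
  · simp only [Nat.cast_mul, map_mul, Nat.succ_sub_one, pow_succ]
    ring
end

section
/- Let p be a prime with p > 3 and let q = p^r be a power of p (r ≥ 1). Then 3·∑_{k=0}^{q-1} k·C(2k,k) ≡ −2·(q/3) (mod p), where (q/3) denotes the Legendre symbol of q modulo 3; i.e., in ℤ/pℤ, three times the image of ∑_{k=0}^{q-1} k·C(2k,k) equals the image of the integer −2·(q/3). (Equivalently, ∑_{k=0}^{q-1} k·C(2k,k) ≡ −(2/3)·(q/3) (mod p).) -/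
open Finset

private lemma wcb_telescope (n : ℕ) :
    ∑ k ∈ Finset.range n, (3 * k + 2) * (2 * k).choose k = n * (2 * n).choose n := by
  induction n with
  | zero => simp
  | succ n ih =>
    rw [Finset.sum_range_succ, ih]
    have h : (n + 1) * (2 * (n + 1)).choose (n + 1) = 2 * (2 * n + 1) * ((2 * n).choose n) := by
      simpa [Nat.centralBinom] using Nat.succ_mul_centralBinom_succ n
    rw [h]; ring

private lemma wcb_transform (p : ℕ) [Fact p.Prime] (hodd : p % 2 = 1) :
    ∀ k, k < p → (((2*k).choose k : ℕ) : ZMod p) = (-4)^k * (((p/2).choose k : ℕ) : ZMod p) := by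
  intro k
  induction k with
  | zero => simp
  | succ k ih =>
    intro hk
    have hp := (Fact.out : p.Prime)
    have hk' : k < p := Nat.lt_of_succ_lt hk
    have ihk := ih hk'
    have hcancel : ((k : ZMod p) + 1) ≠ 0 := by
      have : ((k + 1 : ℕ) : ZMod p) ≠ 0 := by
        rw [Ne, ZMod.natCast_eq_zero_iff]
        intro hdvd
        have := Nat.le_of_dvd (Nat.succ_pos k) hdvd
        omega
      simpa using this
    refine mul_left_cancel₀ hcancel ?_
    have e1 : ((k : ZMod p) + 1) * (((2*(k+1)).choose (k+1) : ℕ) : ZMod p)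
        = 2 * (2*(k:ZMod p)+1) * (((2*k).choose k : ℕ) : ZMod p) := by
      have h : (k + 1) * (2 * (k + 1)).choose (k + 1) = 2 * (2 * k + 1) * ((2 * k).choose k) := by
        simpa [Nat.centralBinom] using Nat.succ_mul_centralBinom_succ k
      exact_mod_cast congrArg (Nat.cast : ℕ → ZMod p) h
    have e2 : (((p/2).choose (k+1) : ℕ) : ZMod p) * ((k : ZMod p) + 1)
        = (((p/2).choose k : ℕ) : ZMod p) * (((p/2 - k : ℕ)) : ZMod p) := by
      exact_mod_cast congrArg (Nat.cast : ℕ → ZMod p) (Nat.choose_succ_right_eq (p/2) k)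
    rw [e1, ihk]
    by_cases hkh : k ≤ p/2
    · have hsub : (((p/2 - k : ℕ)) : ZMod p) = ((p/2 : ℕ) : ZMod p) - (k : ZMod p) := by
        push_cast [Nat.cast_sub hkh]; ring
      have h2 : (2 : ZMod p) * ((p/2 : ℕ) : ZMod p) = -1 := by
        have : (2 * (p/2) : ℕ) = p - 1 := Nat.two_mul_odd_div_two hodd
        have hcast : ((2 * (p/2) : ℕ) : ZMod p) = ((p - 1 : ℕ) : ZMod p) := by rw [this]
        have hp1 : ((p - 1 : ℕ) : ZMod p) = -1 := by
          rw [Nat.cast_sub hp.one_le]; simp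
        push_cast at hcast
        rw [hcast, hp1]
      rw [hsub] at e2
      linear_combination (4*(-4)^k) * e2 + (2*(-4)^k*(((p/2).choose k : ℕ) : ZMod p)) * h2
    · push_neg at hkh
      rw [Nat.choose_eq_zero_of_lt hkh, Nat.choose_eq_zero_of_lt (by omega : p/2 < k+1)]
      simp

private lemma wcb_sum_p (p : ℕ) [Fact p.Prime] (hodd : p % 2 = 1) :
    ∑ k ∈ Finset.range p, (((2*k).choose k : ℕ) : ZMod p) = (-3 : ZMod p)^(p/2) := by
  have hp := (Fact.out : p.Prime)
  rw [Finset.sum_congr rfl (fun k hk => wcb_transform p hodd k (Finset.mem_range.mp hk))]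
  have hsub : Finset.range (p/2 + 1) ⊆ Finset.range p :=
    Finset.range_subset_range.mpr (by have := Nat.div_lt_self hp.pos (by norm_num : 1 < 2); omega)
  rw [← Finset.sum_subset hsub (fun k _ hk => by
    rw [Nat.choose_eq_zero_of_lt (by simpa using hk : p/2 < k)]; simp)]
  have := add_pow (-4 : ZMod p) 1 (p/2)
  simp only [one_pow, mul_one] at this
  rw [show (-3 : ZMod p) = -4 + 1 by ring, this]

private lemma wcb_lucas_step (p : ℕ) [Fact p.Prime] (i b : ℕ) (hi : i < p) :
    (((2*(i + p*b)).choose (i + p*b) : ℕ) : ZMod p) =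
      (((2*i).choose i : ℕ) : ZMod p) * (((2*b).choose b : ℕ) : ZMod p) := by
  have hp := (Fact.out : p.Prime)
  have lucas : ∀ n k : ℕ, ((n.choose k : ℕ) : ZMod p) =
      (((n % p).choose (k % p) : ℕ) : ZMod p) * (((n / p).choose (k / p) : ℕ) : ZMod p) := by
    intro n k
    have h := (Choose.choose_modEq_choose_mod_mul_choose_div_nat (p := p) (n := n) (k := k))
    have := (ZMod.natCast_eq_natCast_iff _ _ _).mpr h
    push_cast at this ⊢
    exact this
  have hkm : (i + p*b) % p = i := by
    rw [Nat.add_mul_mod_self_left, Nat.mod_eq_of_lt hi]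
  have hkd : (i + p*b) / p = b := by
    rw [Nat.add_mul_div_left _ _ hp.pos, Nat.div_eq_of_lt hi]; omega
  by_cases h2i : 2*i < p
  · have hnm : (2*(i + p*b)) % p = 2*i := by
      have : 2*(i+p*b) = 2*i + p*(2*b) := by ring
      rw [this, Nat.add_mul_mod_self_left, Nat.mod_eq_of_lt h2i]
    have hnd : (2*(i + p*b)) / p = 2*b := by
      have : 2*(i+p*b) = 2*i + p*(2*b) := by ring
      rw [this, Nat.add_mul_div_left _ _ hp.pos, Nat.div_eq_of_lt h2i]; omega
    rw [lucas, hnm, hnd, hkm, hkd]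
  · push_neg at h2i
    have heq : 2*(i+p*b) = (2*i - p) + p*(2*b+1) := by
      have h' : 2*i - p + p = 2*i := Nat.sub_add_cancel h2i
      calc 2*(i+p*b) = (2*i) + p*(2*b) := by ring
        _ = (2*i - p + p) + p*(2*b) := by rw [h']
        _ = (2*i - p) + p*(2*b+1) := by ring
    have hnm : (2*(i + p*b)) % p = 2*i - p := by
      rw [heq, Nat.add_mul_mod_self_left]; exact Nat.mod_eq_of_lt (by omega)
    have hnd : (2*(i + p*b)) / p = 2*b+1 := by
      rw [heq, Nat.add_mul_div_left _ _ hp.pos, Nat.div_eq_of_lt (by omega)]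
      omega
    have hz1 : (((2*(i+p*b)).choose (i+p*b) : ℕ) : ZMod p) = 0 := by
      rw [lucas, hnm, hnd, hkm, hkd, Nat.choose_eq_zero_of_lt (by omega : 2*i - p < i)]
      simp
    have hz2 : (((2*i).choose i : ℕ) : ZMod p) = 0 := by
      have hm : (2*i) % p = 2*i - p := Nat.mod_eq_sub_mod h2i ▸ Nat.mod_eq_of_lt (by omega)
      have hd : (2*i) / p = 1 := by
        rw [Nat.div_eq_sub_div hp.pos h2i, Nat.div_eq_of_lt (by omega)]
      rw [lucas, hm, hd, Nat.mod_eq_of_lt hi, Nat.div_eq_of_lt hi,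
        Nat.choose_eq_zero_of_lt (by omega : 2*i - p < i)]
      simp
    rw [hz1, hz2, zero_mul]

private lemma wcb_sum_range_mul {M : Type*} [AddCommMonoid M] (f : ℕ → M) (a m : ℕ) :
    ∑ k ∈ Finset.range (a*m), f k
      = ∑ b ∈ Finset.range m, ∑ i ∈ Finset.range a, f (i + a*b) := by
  induction m with
  | zero => simp
  | succ m ih =>
    rw [Nat.mul_succ, Finset.sum_range_add, ih, Finset.sum_range_succ]
    congr 1
    exact Finset.sum_congr rfl (fun i _ => by rw [Nat.add_comm])

private lemma wcb_T_mul (p m : ℕ) [Fact p.Prime] :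
    ∑ k ∈ Finset.range (p*m), (((2*k).choose k : ℕ) : ZMod p)
      = (∑ k ∈ Finset.range p, (((2*k).choose k : ℕ) : ZMod p))
        * ∑ k ∈ Finset.range m, (((2*k).choose k : ℕ) : ZMod p) := by
  rw [wcb_sum_range_mul, Finset.mul_sum]
  refine Finset.sum_congr rfl fun b _ => ?_
  rw [Finset.sum_mul]
  exact Finset.sum_congr rfl fun i hi => wcb_lucas_step p i b (Finset.mem_range.mp hi)

private lemma wcb_T_pow (p : ℕ) [Fact p.Prime] (r : ℕ) :
    ∑ k ∈ Finset.range (p^r), (((2*k).choose k : ℕ) : ZMod p)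
      = (∑ k ∈ Finset.range p, (((2*k).choose k : ℕ) : ZMod p))^r := by
  induction r with
  | zero => simp
  | succ r ih =>
    rw [show p^(r+1) = p * p^r from by ring, wcb_T_mul, ih, pow_succ]
    ring

private lemma wcb_leg (p : ℕ) [Fact p.Prime] (hp2 : p ≠ 2) :
    ((legendreSym 3 (p : ℤ) : ℤ) : ZMod p) = (-3 : ZMod p)^(p/2) := by
  have hodd : p % 2 = 1 := Nat.odd_iff.mp ((Fact.out : p.Prime).odd_of_ne_two hp2)
  have h1 : legendreSym 3 (p:ℤ) = (-1)^(p/2 * (3/2)) * legendreSym p 3 :=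
    legendreSym.quadratic_reciprocity' hp2 (by norm_num)
  have h2 : legendreSym p (-3) = legendreSym p (-1) * legendreSym p 3 := by
    rw [show (-3 : ℤ) = -1 * 3 by norm_num, legendreSym.mul]
  have h3 : legendreSym p (-1) = (-1)^(p/2) := by
    rw [legendreSym.at_neg_one hp2, ZMod.χ₄_eq_neg_one_pow hodd]
  have : legendreSym 3 (p:ℤ) = legendreSym p (-3) := by
    rw [h1, h2, h3]; norm_num
  rw [this, legendreSym.eq_pow]
  push_cast
  ring

private lemma wcb_leg_pow (p r : ℕ) : legendreSym 3 ((p:ℤ)^r) = (legendreSym 3 (p:ℤ))^r := by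
  haveI : Fact (Nat.Prime 3) := ⟨by norm_num⟩
  induction r with
  | zero => simp [legendreSym.at_one]
  | succ r ih => rw [pow_succ, legendreSym.mul, ih, pow_succ]

theorem weighted_central_binomial_partial_sum_mod_p
    (p : ℕ) (hp : p.Prime) (hp3 : 3 < p) (r : ℕ) (hr : 1 ≤ r) (q : ℕ) (hq : q = p ^ r) :
    ((3 * ∑ k ∈ Finset.range q, k * (2 * k).choose k : ℕ) : ZMod p) =
      ((-2 * legendreSym 3 (q : ℤ) : ℤ) : ZMod p) := by
  haveI : Fact p.Prime := ⟨hp⟩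
  have hp2 : p ≠ 2 := by omega
  have hodd : p % 2 = 1 := Nat.odd_iff.mp (hp.odd_of_ne_two hp2)
  -- the telescoping identity, split
  have hsplit : 3 * (∑ k ∈ Finset.range q, k * (2*k).choose k)
      + 2 * (∑ k ∈ Finset.range q, (2*k).choose k) = q * (2*q).choose q := by
    rw [Finset.mul_sum, Finset.mul_sum, ← Finset.sum_add_distrib, ← wcb_telescope q]
    exact Finset.sum_congr rfl fun k _ => by ring
  have hcast := congrArg (Nat.cast : ℕ → ZMod p) hsplit
  push_cast at hcast
  have hq0 : ((q : ℕ) : ZMod p) = 0 := by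
    rw [hq]; push_cast; rw [ZMod.natCast_self]; exact zero_pow (by omega)
  -- value of the plain sum
  have hS1 : ∑ k ∈ Finset.range q, (((2*k).choose k : ℕ) : ZMod p)
      = ((-3 : ZMod p)^(p/2))^r := by
    rw [hq, wcb_T_pow, wcb_sum_p p hodd]
  have hL : ((legendreSym 3 ((q:ℕ) : ℤ) : ℤ) : ZMod p) = ((-3 : ZMod p)^(p/2))^r := by
    have : ((q:ℕ) : ℤ) = ((p:ℕ) : ℤ)^r := by rw [hq]; push_cast; ring
    rw [this, wcb_leg_pow]
    push_cast
    rw [wcb_leg p hp2]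
  push_cast
  push_cast at hS1 hL hq0
  rw [hL]
  linear_combination hcast - 2 * hS1 + ((2*q).choose q : ZMod p) * hq0
end
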